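/- arXiv:2305.18000 — 7 statements merged into one kernel-verified Lean document; each statement's English description precedes it below -/
import Mathlib

section
/- Let W be the transition rate matrix of a continuous-time Markov jump process on a finite state space in a steady state π with spectral gap g. Then for every τ ≥ 0 and all observables a, b ∈ ℝ^N, |δC_{ba}^τ| ≤ τ e^{−gτ} ‖a‖_* ‖b‖_* Σ_{m,n} |j_{mn}|, where j_{mn} are the steady-state probability currents. -/
open Matrix

private lemma sum_dotProduct' {N : ℕ} {ι : Type*} (s : Finset ι) (f : ι → (Fin N → ℂ))
    (u : Fin N → ℂ) : dotProduct (∑ k ∈ s, f k) u = ∑ k ∈ s, dotProduct (f k) u := by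
  simp [dotProduct, Finset.sum_mul, Finset.sum_apply]
  exact Finset.sum_comm

private lemma dotProduct_sum' {N : ℕ} {ι : Type*} (s : Finset ι) (u : Fin N → ℂ)
    (f : ι → (Fin N → ℂ)) : dotProduct u (∑ k ∈ s, f k) = ∑ k ∈ s, dotProduct u (f k) := by
  simp [dotProduct, Finset.mul_sum, Finset.sum_apply]
  exact Finset.sum_comm

private lemma vecMul_pow_eigen {N : ℕ} (A : Matrix (Fin N) (Fin N) ℂ) (x : Fin N → ℂ) (μ : ℂ)
    (hx : Matrix.vecMul x A = μ • x) (n : ℕ) :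
    Matrix.vecMul x (A ^ n) = μ ^ n • x := by
  induction n with
  | zero => simp [Matrix.vecMul_one]
  | succ n ih =>
    rw [pow_succ, ← Matrix.vecMul_vecMul, ih, Matrix.smul_vecMul, hx, smul_smul, pow_succ]

private lemma vecMul_exp_eigen {N : ℕ} (A : Matrix (Fin N) (Fin N) ℂ) (x : Fin N → ℂ) (μ : ℂ)
    (hx : Matrix.vecMul x A = μ • x) :
    Matrix.vecMul x (NormedSpace.exp A) = Complex.exp μ • x := by
  letI : SeminormedRing (Matrix (Fin N) (Fin N) ℂ) := Matrix.linftyOpSemiNormedRing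
  letI : NormedRing (Matrix (Fin N) (Fin N) ℂ) := Matrix.linftyOpNormedRing
  letI : NormedAlgebra ℝ (Matrix (Fin N) (Fin N) ℂ) := Matrix.linftyOpNormedAlgebra
  have hsum : Summable fun n : ℕ => ((Nat.factorial n : ℝ))⁻¹ • A ^ n :=
    NormedSpace.expSeries_summable' (𝕂 := ℝ) A
  have hL : ∃ L : Matrix (Fin N) (Fin N) ℂ →ₗ[ℝ] (Fin N → ℂ),
      (∀ M, L M = Matrix.vecMul x M) := by
    refine ⟨{ toFun := fun M => Matrix.vecMul x M, map_add' := ?_, map_smul' := ?_ }, fun _ => rfl⟩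
    · intro M₁ M₂; funext j
      simp [Matrix.vecMul, dotProduct, mul_add, Finset.sum_add_distrib]
    · intro c M; funext j
      simp only [Matrix.vecMul, dotProduct, Matrix.smul_apply, RingHom.id_apply,
        Pi.smul_apply, Finset.smul_sum]
      refine Finset.sum_congr rfl fun i _ => ?_
      simp [Complex.real_smul]
      ring
  obtain ⟨L, hLdef⟩ := hL
  have hLcont : Continuous L := L.continuous_of_finiteDimensional
  have hexpA : NormedSpace.exp A = ∑' n : ℕ, ((Nat.factorial n : ℝ))⁻¹ • A ^ n := by
    rw [NormedSpace.exp_eq_tsum ℝ]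
  have h1 : Matrix.vecMul x (NormedSpace.exp A)
      = ∑' n : ℕ, ((Nat.factorial n : ℝ))⁻¹ • μ ^ n • x := by
    rw [hexpA]
    rw [← hLdef]
    have hmap : (∑' n : ℕ, L (((Nat.factorial n : ℝ))⁻¹ • A ^ n))
        = L (∑' n : ℕ, ((Nat.factorial n : ℝ))⁻¹ • A ^ n) :=
      (hsum.hasSum.map L.toAddMonoidHom hLcont).tsum_eq
    rw [← hmap]
    congr 1
    funext n
    rw [L.map_smul, hLdef, vecMul_pow_eigen A x μ hx]
  rw [h1]
  have h2 : ∀ n : ℕ, ((Nat.factorial n : ℝ))⁻¹ • μ ^ n • x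
      = (((Nat.factorial n : ℝ))⁻¹ • μ ^ n) • x := fun n => (smul_assoc _ _ _).symm
  simp_rw [h2]
  rw [Summable.tsum_smul_const (NormedSpace.expSeries_summable' (𝕂 := ℝ) μ)]
  congr 1
  have h3 := congrFun (NormedSpace.exp_eq_tsum ℝ (𝔸 := ℂ)) μ
  rw [← h3, ← Complex.exp_eq_exp_ℂ]

private lemma exp_diff_bound (g τ : ℝ) (hτ : 0 ≤ τ) (z w : ℂ) (hz : z.re ≤ -g) (hw : w.re ≤ -g) :
    ‖Complex.exp (↑τ * z) - Complex.exp (↑τ * w)‖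
      ≤ τ * Real.exp (-(g * τ)) * ‖z - w‖ := by
  have hconv : Convex ℝ { c : ℂ | c.re ≤ -g } := convex_halfSpace_re_le (-g)
  have hder : ∀ x : ℂ, HasDerivAt (fun z : ℂ => Complex.exp (↑τ * z))
      (Complex.exp (↑τ * x) * ↑τ) x := by
    intro x
    have h1 : HasDerivAt (fun z : ℂ => (↑τ : ℂ) * z) (↑τ : ℂ) x := by
      simpa using (hasDerivAt_id x).const_mul (↑τ : ℂ)
    have h2 := (Complex.hasDerivAt_exp ((↑τ : ℂ) * x)).comp x h1
    exact h2
  have key := Convex.norm_image_sub_le_of_norm_hasFDerivWithin_le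
    (f := fun z : ℂ => Complex.exp (↑τ * z))
    (f' := fun x : ℂ => ContinuousLinearMap.toSpanSingleton ℂ
      (Complex.exp (↑τ * x) * ↑τ))
    (s := { c : ℂ | c.re ≤ -g }) (C := τ * Real.exp (-(g * τ)))
    (fun x _ => (hasDerivAt_iff_hasFDerivAt.mp (hder x)).hasFDerivWithinAt)
    ?_ hconv hw hz
  · simpa using key
  · intro x hx
    rw [ContinuousLinearMap.norm_toSpanSingleton]
    simp only [norm_mul, Complex.norm_exp, Complex.norm_real, Real.norm_eq_abs]
    have h1 : (↑τ * x).re = τ * x.re := by simp [Complex.mul_re]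
    rw [h1, abs_of_nonneg hτ, mul_comm]
    have : Real.exp (τ * x.re) ≤ Real.exp (-(g * τ)) := by
      apply Real.exp_le_exp.mpr
      have := mul_le_mul_of_nonneg_left hx hτ
      nlinarith
    exact mul_le_mul_of_nonneg_left this hτ

/-- **Finite-time asymmetry of cross-correlations is bounded by the total current.**
For a continuous-time Markov jump process with rate matrix `W`, steady state `π`, and spectral
gap `g`, `|δC_{ba}^τ| ≤ τ e^{−gτ} ‖a‖_* ‖b‖_* Σ_{m,n} |j_{mn}|` for all `τ ≥ 0`. -/
theorem asymmetry_le_current_bound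
    (N : ℕ) (W : Matrix (Fin N) (Fin N) ℝ)
    (hW_off : ∀ m n : Fin N, m ≠ n → 0 ≤ W m n)
    (hW_diag : ∀ n : Fin N, W n n = -∑ m ∈ Finset.univ.erase n, W m n)
    (π : Fin N → ℝ) (hπ_pos : ∀ n, 0 < π n) (hπ_sum : ∑ n, π n = 1)
    (hstat : W.mulVec π = 0)
    -- spectral decomposition of `W` by left eigenvectors
    (g : ℝ) (hg : 0 < g)
    (lam : Fin N → ℂ) (v : Fin N → Fin N → ℂ) (n₀ : Fin N)
    (hlam₀ : lam n₀ = 0)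
    (hv₀ : ∃ c : ℂ, v n₀ = fun _ => c)
    (hgap : ∀ n, n ≠ n₀ → (lam n).re ≤ -g)
    (heig : ∀ n, Matrix.vecMul (star (v n)) (W.map (Complex.ofReal)) = lam n • star (v n))
    (hnorm : ∀ n, ∑ i, Complex.normSq (v n i) = 1)
    (hbasis : LinearIndependent ℂ v)
    -- observables and their expansions in the left-eigenvector basis
    (τ : ℝ) (hτ : 0 ≤ τ) (a b : Fin N → ℝ) (ta tb : Fin N → ℂ)
    (hta : (fun i => (a i : ℂ)) = ∑ n, ta n • v n)
    (htb : (fun i => (b i : ℂ)) = ∑ n, tb n • v n) :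
    |b ⬝ᵥ (NormedSpace.exp (τ • W) * Matrix.diagonal π).mulVec a -
        a ⬝ᵥ (NormedSpace.exp (τ • W) * Matrix.diagonal π).mulVec b| ≤
      τ * Real.exp (-(g * τ)) *
        (∑ n ∈ Finset.univ.erase n₀, ‖ta n‖) *
        (∑ n ∈ Finset.univ.erase n₀, ‖tb n‖) *
        (∑ m, ∑ n, |W m n * π n - W n m * π m|) := by
  classical
  set Wc : Matrix (Fin N) (Fin N) ℂ := W.map (Complex.ofReal) with hWcdef
  set Dc : Matrix (Fin N) (Fin N) ℂ := Matrix.diagonal (fun i => (π i : ℂ)) with hDcdef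
  set Ec : Matrix (Fin N) (Fin N) ℂ := NormedSpace.exp (τ • Wc) with hEcdef
  set q : Fin N → ℂ := fun i => (π i : ℂ) with hqdef
  set e : Fin N → ℂ := fun k => Complex.exp ((τ : ℂ) * (starRingEnd ℂ) (lam k)) with hedef
  set P : Fin N → Fin N → ℂ := fun m n => dotProduct (v m) (Dc.mulVec (v n)) with hPdef
  set T : ℝ := ∑ m, ∑ n, |W m n * π n - W n m * π m| with hTdef
  have hT0 : 0 ≤ T := by
    rw [hTdef]
    exact Finset.sum_nonneg fun m _ => Finset.sum_nonneg fun n _ => abs_nonneg _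
  -- conjugated eigen relation
  have hconj : ∀ k, Matrix.vecMul (v k) Wc = (starRingEnd ℂ) (lam k) • v k := by
    intro k
    funext j
    have h0 := congrFun (heig k) j
    simp only [Matrix.vecMul, dotProduct, Pi.star_apply, Pi.smul_apply,
      smul_eq_mul, hWcdef, Matrix.map_apply] at h0
    have h1 := congrArg (starRingEnd ℂ) h0
    simp only [map_sum, _root_.map_mul, Complex.conj_conj, RingHomCompTriple.comp_apply,
      RingHom.id_apply] at h1
    simp only [Complex.conj_ofReal] at h1
    simpa [Matrix.vecMul, dotProduct, hWcdef, Matrix.map_apply, mul_comm] using h1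
  -- exp eigen relation
  have hE : ∀ k, Matrix.vecMul (v k) Ec = e k • v k := by
    intro k
    rw [hEcdef]
    have hsm : Matrix.vecMul (v k) (τ • Wc) = ((τ : ℂ) * (starRingEnd ℂ) (lam k)) • v k := by
      have : Matrix.vecMul (v k) (τ • Wc) = τ • Matrix.vecMul (v k) Wc := by
        funext j
        simp only [Matrix.vecMul, dotProduct, Matrix.smul_apply, Pi.smul_apply,
          Finset.smul_sum]
        refine Finset.sum_congr rfl fun i _ => ?_
        simp [Complex.real_smul]; ring
      rw [this, hconj k]
      funext i
      simp [Complex.real_smul]; ring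
    exact vecMul_exp_eigen (τ • Wc) (v k) _ hsm
  -- the stationary vector complexified
  have hπ0 : Wc.mulVec q = 0 := by
    funext i
    have h0 := congrFun hstat i
    simp only [Matrix.mulVec, dotProduct, Pi.zero_apply] at h0
    simp only [Matrix.mulVec, dotProduct, hWcdef, hqdef, Matrix.map_apply, Pi.zero_apply]
    exact_mod_cast h0
  -- orthogonality to the stationary vector
  have horth : ∀ m, m ≠ n₀ → dotProduct (v m) q = 0 := by
    intro m hm
    have hlamne : (starRingEnd ℂ) (lam m) ≠ 0 := by
      simp only [ne_eq, map_eq_zero]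
      intro h0
      have := hgap m hm
      rw [h0] at this
      simp only [Complex.zero_re] at this
      linarith
    have h1 : dotProduct (v m) (Wc.mulVec q) = 0 := by rw [hπ0]; simp
    rw [Matrix.dotProduct_mulVec, hconj m, smul_dotProduct] at h1
    simpa [hlamne] using h1
  -- symmetry of P
  have hPsymm : ∀ m n, P m n = P n m := by
    intro m n
    simp only [hPdef, dotProduct, Matrix.mulVec_diagonal, hDcdef]
    refine Finset.sum_congr rfl fun i _ => ?_
    ring
  -- vanishing of P against n₀
  have hPn₀ : ∀ m, m ≠ n₀ → P m n₀ = 0 := by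
    intro m hm
    obtain ⟨c, hc⟩ := hv₀
    have h1 : P m n₀ = c * dotProduct (v m) q := by
      simp only [hPdef, dotProduct, hqdef, Finset.mul_sum]
      refine Finset.sum_congr rfl fun i _ => ?_
      rw [Matrix.mulVec_diagonal, hc]
      ring
    rw [h1, horth m hm, mul_zero]
  -- expansion of correlations
  have expand : ∀ (c d : Fin N → ℂ),
      dotProduct (∑ m, c m • v m) ((Ec * Dc).mulVec (∑ n, d n • v n))
        = ∑ m, ∑ n, c m * d n * (e m * P m n) := by
    intro c d
    rw [← Matrix.mulVec_mulVec, sum_dotProduct']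
    refine Finset.sum_congr rfl fun m _ => ?_
    rw [smul_dotProduct, Matrix.dotProduct_mulVec, hE m, smul_dotProduct,
      Matrix.dotProduct_mulVec (v m) Dc, dotProduct_sum']
    rw [Finset.smul_sum, Finset.smul_sum]
    refine Finset.sum_congr rfl fun n _ => ?_
    rw [dotProduct_smul, ← Matrix.dotProduct_mulVec]
    simp only [smul_eq_mul, hPdef]
    ring
  have hCba : dotProduct (fun i => (b i : ℂ)) ((Ec * Dc).mulVec (fun i => (a i : ℂ)))
      = ∑ m, ∑ n, tb m * ta n * (e m * P m n) := by
    rw [htb, hta]; exact expand tb ta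
  have hCab : dotProduct (fun i => (a i : ℂ)) ((Ec * Dc).mulVec (fun i => (b i : ℂ)))
      = ∑ m, ∑ n, tb m * ta n * (e n * P m n) := by
    rw [hta, htb, expand ta tb, Finset.sum_comm]
    refine Finset.sum_congr rfl fun m _ => Finset.sum_congr rfl fun n _ => ?_
    rw [hPsymm n m]
    ring
  -- complexification of the exponential
  have hmapE : (NormedSpace.exp (τ • W)).map Complex.ofReal = Ec := by
    letI : SeminormedRing (Matrix (Fin N) (Fin N) ℝ) := Matrix.linftyOpSemiNormedRing
    letI : NormedRing (Matrix (Fin N) (Fin N) ℝ) := Matrix.linftyOpNormedRing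
    letI : NormedAlgebra ℝ (Matrix (Fin N) (Fin N) ℝ) := Matrix.linftyOpNormedAlgebra
    letI : SeminormedRing (Matrix (Fin N) (Fin N) ℂ) := Matrix.linftyOpSemiNormedRing
    letI : NormedRing (Matrix (Fin N) (Fin N) ℂ) := Matrix.linftyOpNormedRing
    letI : NormedAlgebra ℝ (Matrix (Fin N) (Fin N) ℂ) := Matrix.linftyOpNormedAlgebra
    have hcont : Continuous fun M : Matrix (Fin N) (Fin N) ℝ =>
        (Complex.ofRealHom.mapMatrix : Matrix (Fin N) (Fin N) ℝ →+* Matrix (Fin N) (Fin N) ℂ) M := by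
      simp only [RingHom.mapMatrix_apply]
      apply continuous_pi; intro i; apply continuous_pi; intro j
      exact Complex.continuous_ofReal.comp ((continuous_apply j).comp (continuous_apply i))
    letI : NormedAlgebra ℚ (Matrix (Fin N) (Fin N) ℝ) :=
      NormedAlgebra.restrictScalars ℚ ℝ (Matrix (Fin N) (Fin N) ℝ)
    have h := NormedSpace.map_exp
      (Complex.ofRealHom.mapMatrix : Matrix (Fin N) (Fin N) ℝ →+* Matrix (Fin N) (Fin N) ℂ)
      hcont (τ • W)
    simp only [RingHom.mapMatrix_apply] at h
    rw [show ((τ • W).map ⇑Complex.ofRealHom) = τ • Wc by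
      ext i j; simp [hWcdef, Matrix.map_apply, Complex.real_smul]] at h
    rw [hEcdef]
    exact h
  -- the cast identity
  have hcast : ∀ (x y : Fin N → ℝ),
      ((dotProduct x ((NormedSpace.exp (τ • W) * Matrix.diagonal π).mulVec y) : ℝ) : ℂ)
        = dotProduct (fun i => (x i : ℂ)) ((Ec * Dc).mulVec (fun i => (y i : ℂ))) := by
    intro x y
    have hM : Ec * Dc = (NormedSpace.exp (τ • W) * Matrix.diagonal π).map Complex.ofReal := by
      rw [show (Complex.ofReal : ℝ → ℂ) = ⇑Complex.ofRealHom from rfl, Matrix.map_mul]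
      congr 1
      · exact hmapE.symm
      · rw [Matrix.diagonal_map (by simp)]
        rfl
    rw [hM]
    simp only [dotProduct, Matrix.mulVec, Matrix.map_apply]
    push_cast
    rfl
  -- the asymmetry as a double sum
  set F : Fin N → Fin N → ℂ := fun m n => tb m * ta n * ((e m - e n) * P m n) with hFdef
  have hδc : ((b ⬝ᵥ (NormedSpace.exp (τ • W) * Matrix.diagonal π).mulVec a -
      a ⬝ᵥ (NormedSpace.exp (τ • W) * Matrix.diagonal π).mulVec b : ℝ) : ℂ)
      = ∑ m, ∑ n, F m n := by
    rw [Complex.ofReal_sub, hcast b a, hcast a b, hCba, hCab, ← Finset.sum_sub_distrib]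
    refine Finset.sum_congr rfl fun m _ => ?_
    rw [← Finset.sum_sub_distrib]
    refine Finset.sum_congr rfl fun n _ => ?_
    simp only [hFdef]
    ring
  -- the current matrix
  set Jc : Matrix (Fin N) (Fin N) ℂ :=
    Matrix.of fun i j => ((W i j * π j - W j i * π i : ℝ) : ℂ) with hJcdef
  have hJ : ∀ m n, ((starRingEnd ℂ) (lam m) - (starRingEnd ℂ) (lam n)) * P m n
      = dotProduct (v m) (Jc.mulVec (v n)) := by
    intro m n
    have h1 : (starRingEnd ℂ) (lam m) * P m n
        = dotProduct (v m) ((Wc * Dc).mulVec (v n)) := by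
      rw [← Matrix.mulVec_mulVec, Matrix.dotProduct_mulVec, hconj m, smul_dotProduct]
      simp only [hPdef, smul_eq_mul]
    have h2 : (starRingEnd ℂ) (lam n) * P m n
        = dotProduct (v m) ((Dc * Wcᵀ).mulVec (v n)) := by
      rw [← Matrix.mulVec_mulVec, Matrix.mulVec_transpose, hconj n, Matrix.mulVec_smul,
        dotProduct_smul]
      simp only [hPdef, smul_eq_mul]
    have h3 : Wc * Dc - Dc * Wcᵀ = Jc := by
      ext i j
      simp only [hDcdef, hqdef, hWcdef, hJcdef, Matrix.sub_apply, Matrix.mul_diagonal,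
        Matrix.diagonal_mul, Matrix.map_apply, Matrix.transpose_apply, Matrix.of_apply]
      push_cast
      ring
    rw [sub_mul, h1, h2, ← dotProduct_sub, ← Matrix.sub_mulVec, h3]
  have habsv : ∀ k i, ‖v k i‖ ≤ 1 := by
    intro k i
    have h1 : Complex.normSq (v k i) ≤ 1 := by
      rw [← hnorm k]
      exact Finset.single_le_sum (fun j _ => Complex.normSq_nonneg _) (Finset.mem_univ i)
    have h2 : ‖v k i‖ ^ 2 ≤ 1 := by rw [Complex.sq_norm]; exact h1
    nlinarith [norm_nonneg (v k i)]
  have hJb : ∀ m n, ‖dotProduct (v m) (Jc.mulVec (v n))‖ ≤ T := by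
    intro m n
    have h0 : dotProduct (v m) (Jc.mulVec (v n))
        = ∑ i, ∑ j, v m i * (Jc i j * v n j) := by
      simp [dotProduct, Matrix.mulVec, Finset.mul_sum]
    rw [h0, hTdef]
    refine (norm_sum_le _ _).trans (Finset.sum_le_sum fun i _ => ?_)
    refine (norm_sum_le _ _).trans (Finset.sum_le_sum fun j _ => ?_)
    rw [norm_mul, norm_mul]
    have e1 := habsv m i
    have e2 := habsv n j
    have e3 : ‖Jc i j‖ = |W i j * π j - W j i * π i| := by
      have h5 : Jc i j = ((W i j * π j - W j i * π i : ℝ) : ℂ) := rfl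
      rw [h5, Complex.norm_real, Real.norm_eq_abs]
    rw [e3]
    have h4 : ‖v m i‖ * ‖v n j‖ ≤ 1 :=
      mul_le_one₀ e1 (norm_nonneg _) e2
    nlinarith [h4, abs_nonneg (W i j * π j - W j i * π i),
      norm_nonneg (v m i), norm_nonneg (v n j)]
  -- key bound on each term
  have hkey : ∀ m, m ≠ n₀ → ∀ n, n ≠ n₀ →
      ‖(e m - e n) * P m n‖ ≤ τ * Real.exp (-(g * τ)) * T := by
    intro m hm n hn
    by_cases hc : (starRingEnd ℂ) (lam m) = (starRingEnd ℂ) (lam n)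
    · have hee : e m = e n := by rw [hedef]; simp only [hc]
      rw [hee, sub_self, zero_mul, norm_zero]
      positivity
    · have hΔ : (starRingEnd ℂ) (lam m) - (starRingEnd ℂ) (lam n) ≠ 0 := sub_ne_zero.mpr hc
      have h1 : ‖e m - e n‖ ≤ τ * Real.exp (-(g * τ)) *
          ‖(starRingEnd ℂ) (lam m) - (starRingEnd ℂ) (lam n)‖ := by
        have hzre : ((starRingEnd ℂ) (lam m)).re ≤ -g := by
          rw [Complex.conj_re]; exact hgap m hm
        have hwre : ((starRingEnd ℂ) (lam n)).re ≤ -g := by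
          rw [Complex.conj_re]; exact hgap n hn
        simpa [hedef] using exp_diff_bound g τ hτ _ _ hzre hwre
      calc ‖(e m - e n) * P m n‖
          = ‖e m - e n‖ * ‖P m n‖ := norm_mul _ _
        _ ≤ (τ * Real.exp (-(g * τ)) *
              ‖(starRingEnd ℂ) (lam m) - (starRingEnd ℂ) (lam n)‖)
            * ‖P m n‖ :=
            mul_le_mul_of_nonneg_right h1 (norm_nonneg _)
        _ = τ * Real.exp (-(g * τ)) *
            ‖((starRingEnd ℂ) (lam m) - (starRingEnd ℂ) (lam n)) * P m n‖ := by
            rw [norm_mul]; ring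
        _ = τ * Real.exp (-(g * τ)) *
            ‖dotProduct (v m) (Jc.mulVec (v n))‖ := by rw [hJ m n]
        _ ≤ τ * Real.exp (-(g * τ)) * T := by
            have : (0:ℝ) ≤ τ * Real.exp (-(g * τ)) := by positivity
            exact mul_le_mul_of_nonneg_left (hJb m n) this
  -- terms with index n₀ vanish
  have hrow : ∀ n, F n₀ n = 0 := by
    intro n
    by_cases hn : n = n₀
    · subst hn; simp [hFdef]
    · have := hPn₀ n hn
      simp only [hFdef, hPsymm n₀ n, this, mul_zero]
  have hcol : ∀ m, m ≠ n₀ → F m n₀ = 0 := by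
    intro m hm
    simp only [hFdef, hPn₀ m hm, mul_zero]
  have hrestrict : (∑ m, ∑ n, F m n)
      = ∑ m ∈ Finset.univ.erase n₀, ∑ n ∈ Finset.univ.erase n₀, F m n := by
    rw [← Finset.sum_subset (Finset.subset_univ (Finset.univ.erase n₀))
      (fun m _ hm => by
        have hmeq : m = n₀ := by simpa using hm
        subst hmeq
        exact Finset.sum_eq_zero fun n _ => hrow n)]
    refine Finset.sum_congr rfl fun m hm => ?_
    have hmne : m ≠ n₀ := (Finset.mem_erase.mp hm).1
    exact (Finset.sum_subset (Finset.subset_univ _)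
      (fun n _ hn => by
        have hneq : n = n₀ := by simpa using hn
        subst hneq
        exact hcol m hmne)).symm
  -- assemble the final bound
  have hstep : |b ⬝ᵥ (NormedSpace.exp (τ • W) * Matrix.diagonal π).mulVec a -
      a ⬝ᵥ (NormedSpace.exp (τ • W) * Matrix.diagonal π).mulVec b|
      = ‖∑ m ∈ Finset.univ.erase n₀, ∑ n ∈ Finset.univ.erase n₀, F m n‖ := by
    rw [← hrestrict, ← hδc, Complex.norm_real, Real.norm_eq_abs]
  rw [hstep]
  calc ‖∑ m ∈ Finset.univ.erase n₀, ∑ n ∈ Finset.univ.erase n₀, F m n‖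
      ≤ ∑ m ∈ Finset.univ.erase n₀, ∑ n ∈ Finset.univ.erase n₀, ‖F m n‖ := by
        refine (norm_sum_le _ _).trans (Finset.sum_le_sum fun m _ => ?_)
        exact norm_sum_le _ _
    _ ≤ ∑ m ∈ Finset.univ.erase n₀, ∑ n ∈ Finset.univ.erase n₀,
          ‖tb m‖ * ‖ta n‖ * (τ * Real.exp (-(g * τ)) * T) := by
        refine Finset.sum_le_sum fun m hm => Finset.sum_le_sum fun n hn => ?_
        have hmne : m ≠ n₀ := (Finset.mem_erase.mp hm).1
        have hnne : n ≠ n₀ := (Finset.mem_erase.mp hn).1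
        have hFabs : ‖F m n‖
            = ‖tb m‖ * ‖ta n‖ * ‖(e m - e n) * P m n‖ := by
          simp only [hFdef]
          rw [norm_mul, norm_mul]
        rw [hFabs, mul_assoc, mul_assoc]
        refine mul_le_mul_of_nonneg_left ?_ (norm_nonneg _)
        exact mul_le_mul_of_nonneg_left (hkey m hmne n hnne) (norm_nonneg _)
    _ = τ * Real.exp (-(g * τ)) *
          (∑ n ∈ Finset.univ.erase n₀, ‖ta n‖) *
          (∑ n ∈ Finset.univ.erase n₀, ‖tb n‖) * T := by
        simp_rw [← Finset.sum_mul]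
        rw [← Finset.sum_mul_sum]
        ring
end

section
/- For a continuous-time Markov jump process with rate matrix W and steady state π, the asymmetry of cross-correlations has the integral representation δC_{ba}^τ = τ ∫₀¹ ⟨b| e^{sWτ} J e^{(1−s)Wᵀτ} |a⟩ ds for every τ ≥ 0 and all a, b ∈ ℝ^N, where J = WΠ − ΠWᵀ is the current matrix. -/
open Matrix

/-- **Integral representation of the asymmetry of cross-correlations.**
For a continuous-time Markov jump process with rate matrix `W` and steady state `π`,
`δC_{ba}^τ = τ ∫₀¹ ⟨b| e^{sWτ} J e^{(1−s)Wᵀτ} |a⟩ ds`, where `J = WΠ − ΠWᵀ`. -/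
theorem asymmetry_eq_integral_current
    (N : ℕ) (W : Matrix (Fin N) (Fin N) ℝ)
    (hW_off : ∀ m n : Fin N, m ≠ n → 0 ≤ W m n)
    (hW_diag : ∀ n : Fin N, W n n = -∑ m ∈ Finset.univ.erase n, W m n)
    (π : Fin N → ℝ) (hπ_pos : ∀ n, 0 < π n) (hπ_sum : ∑ n, π n = 1)
    (hstat : W.mulVec π = 0)
    (τ : ℝ) (hτ : 0 ≤ τ) (a b : Fin N → ℝ) :
    b ⬝ᵥ (NormedSpace.exp (τ • W) * Matrix.diagonal π).mulVec a -
      a ⬝ᵥ (NormedSpace.exp (τ • W) * Matrix.diagonal π).mulVec b =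
    τ * ∫ s in (0:ℝ)..1,
        b ⬝ᵥ (NormedSpace.exp ((s * τ) • W) *
              (W * Matrix.diagonal π - Matrix.diagonal π * Wᵀ) *
              NormedSpace.exp (((1 - s) * τ) • Wᵀ)).mulVec a := by
  letI : NormedRing (Matrix (Fin N) (Fin N) ℝ) := Matrix.linftyOpNormedRing
  letI : NormedAlgebra ℝ (Matrix (Fin N) (Fin N) ℝ) := Matrix.linftyOpNormedAlgebra
  letI : CompleteSpace (Matrix (Fin N) (Fin N) ℝ) := FiniteDimensional.complete ℝ _
  set P := Matrix.diagonal π with hP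
  set J := W * P - P * Wᵀ with hJ
  set A := τ • W with hA
  set B := τ • Wᵀ with hB
  -- the scalar linear functional M ↦ b ⬝ᵥ M.mulVec a
  let L : Matrix (Fin N) (Fin N) ℝ →ₗ[ℝ] ℝ :=
    { toFun := fun M => b ⬝ᵥ M.mulVec a
      map_add' := by intro M₁ M₂; simp [Matrix.add_mulVec, dotProduct_add]
      map_smul' := by intro c M; simp [Matrix.smul_mulVec, dotProduct_smul] }
  let Lc := LinearMap.toContinuousLinearMap L
  have hLc : Continuous Lc := Lc.continuous
  -- the interpolating matrix function
  set g : ℝ → Matrix (Fin N) (Fin N) ℝ := fun s =>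
    NormedSpace.exp (s • A) * P * NormedSpace.exp ((1 - s) • B) with hg
  set D : ℝ → Matrix (Fin N) (Fin N) ℝ := fun s =>
    NormedSpace.exp (s • A) * (τ • J) * NormedSpace.exp ((1 - s) • B) with hD
  have hderiv : ∀ s : ℝ, HasDerivAt g (D s) s := by
    intro s
    have h1 : HasDerivAt (fun u : ℝ => NormedSpace.exp (u • A))
        (NormedSpace.exp (s • A) * A) s := hasDerivAt_exp_smul_const A s
    have h2' : HasDerivAt (fun u : ℝ => NormedSpace.exp (u • B))
        (B * NormedSpace.exp ((1 - s) • B)) (1 - s) := hasDerivAt_exp_smul_const' B (1 - s)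
    have hu : HasDerivAt (fun u : ℝ => 1 - u) (-1) s := by
      simpa using (hasDerivAt_id s).const_sub 1
    have h2 : HasDerivAt (fun u : ℝ => NormedSpace.exp ((1 - u) • B))
        (-(B * NormedSpace.exp ((1 - s) • B))) s := by
      have := HasDerivAt.scomp s h2' hu
      rw [neg_one_smul] at this
      exact this
    have hp : HasDerivAt (fun u : ℝ => NormedSpace.exp (u • A) * P)
        (NormedSpace.exp (s • A) * A * P) s := h1.mul_const P
    have h3 := hp.mul h2
    convert h3 using 1
    · rfl
    · rfl
    · rfl
    · rfl
    have hAP : A * P - P * B = τ • J := by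
      simp [hA, hB, hJ, Matrix.smul_mul, Matrix.mul_smul, smul_sub]
    rw [hD]
    dsimp only
    rw [← hAP]
    noncomm_ring
  -- continuity of the derivative
  have hcont : Continuous D := by
    let +nondep : NormedAlgebra ℚ (Matrix (Fin N) (Fin N) ℝ) := .restrictScalars ℚ ℝ _
    have e1 : Continuous fun s : ℝ => NormedSpace.exp (s • A) :=
      NormedSpace.exp_continuous.comp (continuous_id.smul continuous_const)
    have e2 : Continuous fun s : ℝ => NormedSpace.exp ((1 - s) • B) :=
      NormedSpace.exp_continuous.comp ((continuous_const.sub continuous_id).smul continuous_const)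
    exact (e1.mul continuous_const).mul e2
  -- FTC
  have hftc : (∫ s in (0:ℝ)..1, Lc (D s)) = Lc (g 1) - Lc (g 0) := by
    apply intervalIntegral.integral_eq_sub_of_hasDerivAt (f := fun s => Lc (g s))
    · intro s _
      exact Lc.hasFDerivAt.comp_hasDerivAt s (hderiv s)
    · exact (hLc.comp hcont).intervalIntegrable 0 1
  -- endpoint values
  have hg1 : g 1 = NormedSpace.exp A * P := by
    simp [hg, NormedSpace.exp_zero]
  have hg0 : g 0 = P * NormedSpace.exp B := by
    simp [hg, NormedSpace.exp_zero]
  have htrans : (NormedSpace.exp A * P)ᵀ = P * NormedSpace.exp B := by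
    rw [Matrix.transpose_mul, ← Matrix.exp_transpose]
    simp only [hA, hB, Matrix.transpose_smul, Matrix.transpose_transpose]
    rw [hP, Matrix.diagonal_transpose]
  have hswap : Lc (g 0) = a ⬝ᵥ (NormedSpace.exp A * P).mulVec b := by
    rw [hg0, ← htrans]
    show b ⬝ᵥ ((NormedSpace.exp A * P)ᵀ).mulVec a = _
    rw [Matrix.mulVec_transpose, dotProduct_comm]
    rw [Matrix.dotProduct_mulVec]
  have hLD : ∀ s : ℝ, Lc (D s) = τ *
      (b ⬝ᵥ (NormedSpace.exp ((s * τ) • W) * J *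
        NormedSpace.exp (((1 - s) * τ) • Wᵀ)).mulVec a) := by
    intro s
    have e1 : s • A = (s * τ) • W := by rw [hA, smul_smul]
    have e2 : (1 - s) • B = ((1 - s) * τ) • Wᵀ := by rw [hB, smul_smul]
    show b ⬝ᵥ (D s).mulVec a = _
    rw [hD]
    dsimp only
    rw [e1, e2, Matrix.mul_smul, Matrix.smul_mul, Matrix.smul_mulVec,
      dotProduct_smul, smul_eq_mul]
  calc b ⬝ᵥ (NormedSpace.exp (τ • W) * Matrix.diagonal π).mulVec a -
        a ⬝ᵥ (NormedSpace.exp (τ • W) * Matrix.diagonal π).mulVec b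
      = Lc (g 1) - Lc (g 0) := by
        rw [hswap, hg1]; rfl
    _ = ∫ s in (0:ℝ)..1, Lc (D s) := hftc.symm
    _ = ∫ s in (0:ℝ)..1, τ *
          (b ⬝ᵥ (NormedSpace.exp ((s * τ) • W) * J *
            NormedSpace.exp (((1 - s) * τ) • Wᵀ)).mulVec a) := by
        simp_rw [hLD]
    _ = τ * ∫ s in (0:ℝ)..1,
          b ⬝ᵥ (NormedSpace.exp ((s * τ) • W) * J *
            NormedSpace.exp (((1 - s) * τ) • Wᵀ)).mulVec a :=
        intervalIntegral.integral_const_mul _ _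
end

section
/- For a continuous-time Markov jump process in a steady state π, the dynamical state mobility is at most half the dynamical activity rate: κ ≤ γ/2. -/
open Matrix

lemma key_ineq : ∀ t : ℝ, 1 < t → 2 * (t - 1) ≤ (t + 1) * Real.log t := by
  intro t ht
  set g : ℝ → ℝ := fun x => (x + 1) * Real.log x - 2 * (x - 1) with hg
  have hmono : MonotoneOn g (Set.Ici 1) := by
    apply monotoneOn_of_deriv_nonneg (convex_Ici 1)
    · apply ContinuousOn.sub
      · exact (continuousOn_id.add continuousOn_const).mul
          (Real.continuousOn_log.mono (by intro x hx; simp at hx ⊢; linarith))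
      · fun_prop
    · intro x hx
      rw [interior_Ici] at hx
      have hx0 : (0:ℝ) < x := lt_trans one_pos hx
      have hd : HasDerivAt g (1 * Real.log x + (x + 1) * x⁻¹ - 2) x := by
        have h1 : HasDerivAt (fun x : ℝ => (x + 1) * Real.log x)
            (1 * Real.log x + (x + 1) * x⁻¹) x :=
          ((hasDerivAt_id x).add_const 1).mul (Real.hasDerivAt_log hx0.ne')
        have h2 : HasDerivAt (fun x : ℝ => 2 * (x - 1)) 2 x := by
          simpa using ((hasDerivAt_id x).sub_const 1).const_mul 2
        exact h1.sub h2
      exact hd.differentiableAt.differentiableWithinAt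
    · intro x hx
      rw [interior_Ici] at hx
      have hx0 : (0:ℝ) < x := lt_trans one_pos hx
      have hd : HasDerivAt g (1 * Real.log x + (x + 1) * x⁻¹ - 2) x := by
        have h1 : HasDerivAt (fun x : ℝ => (x + 1) * Real.log x)
            (1 * Real.log x + (x + 1) * x⁻¹) x :=
          ((hasDerivAt_id x).add_const 1).mul (Real.hasDerivAt_log hx0.ne')
        have h2 : HasDerivAt (fun x : ℝ => 2 * (x - 1)) 2 x := by
          simpa using ((hasDerivAt_id x).sub_const 1).const_mul 2
        exact h1.sub h2
      rw [hd.deriv]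
      have hlog : 1 - x⁻¹ ≤ Real.log x := by
        have := Real.log_le_sub_one_of_pos (show (0:ℝ) < x⁻¹ by positivity)
        rw [Real.log_inv] at this
        linarith
      have : (x + 1) * x⁻¹ = 1 + x⁻¹ := by field_simp
      rw [this]; linarith
  have h1 : g 1 ≤ g t := hmono (by simp) (by simp [le_of_lt ht]) (le_of_lt ht)
  simp [hg, Real.log_one] at h1
  linarith

lemma logmean_le (a b : ℝ) (ha : 0 < a) (hb : 0 < b) (hne : a ≠ b) :
    (a - b) / Real.log (a / b) ≤ (a + b) / 2 := by
  rcases lt_or_gt_of_ne hne with h | h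
  · have hb' := key_ineq (b / a) (by rw [lt_div_iff₀ ha]; linarith)
    have hlogpos : 0 < Real.log (b / a) := Real.log_pos (by rw [lt_div_iff₀ ha]; linarith)
    have hlogeq : Real.log (a / b) = -Real.log (b / a) := by
      rw [← Real.log_inv]; congr 1; field_simp
    rw [hlogeq, div_neg]
    have hre : -((a - b) / Real.log (b / a)) = (b - a) / Real.log (b / a) := by ring
    rw [hre, div_le_iff₀ hlogpos]
    have h2 : 2 * (b - a) ≤ (b + a) * Real.log (b / a) := by
      have := mul_le_mul_of_nonneg_left hb' (le_of_lt ha)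
      have ha' : a ≠ 0 := ha.ne'
      field_simp at this
      nlinarith [this]
    nlinarith [h2]
  · have hb' := key_ineq (a / b) (by rw [lt_div_iff₀ hb]; linarith)
    have hlogpos : 0 < Real.log (a / b) := Real.log_pos (by rw [lt_div_iff₀ hb]; linarith)
    rw [div_le_iff₀ hlogpos]
    have h2 : 2 * (a - b) ≤ (a + b) * Real.log (a / b) := by
      have := mul_le_mul_of_nonneg_left hb' (le_of_lt hb)
      have hb'' : b ≠ 0 := hb.ne'
      field_simp at this
      nlinarith [this]
    nlinarith [h2]

/-- **Dynamical state mobility is at most half the dynamical activity rate: `κ ≤ γ/2`.**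
Here `κ = Σ_{m>n} j_{mn} / ln(w_{mn}π_n/(w_{nm}π_m))` (sum over pairs `m > n` with
`w_{mn} > 0`) and `γ = Σ_{m>n} (w_{mn}π_n + w_{nm}π_m)`. -/
theorem mobility_le_half_activity
    (N : ℕ) (W : Matrix (Fin N) (Fin N) ℝ)
    (hW_off : ∀ m n : Fin N, m ≠ n → 0 ≤ W m n)
    (hW_diag : ∀ n : Fin N, W n n = -∑ m ∈ Finset.univ.erase n, W m n)
    (hW_sign : ∀ m n : Fin N, m ≠ n → (0 < W m n ↔ 0 < W n m))
    (π : Fin N → ℝ) (hπ_pos : ∀ n, 0 < π n) (hπ_sum : ∑ n, π n = 1)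
    (hstat : W.mulVec π = 0)
    (hW_ne : ∀ m n : Fin N, n < m → 0 < W m n → W m n * π n ≠ W n m * π m)
    (κ γ : ℝ)
    (hκ : κ = ∑ m, ∑ n, if n < m ∧ 0 < W m n then
        (W m n * π n - W n m * π m) / Real.log ((W m n * π n) / (W n m * π m)) else 0)
    (hγ : γ = ∑ m, ∑ n, if n < m then W m n * π n + W n m * π m else 0) :
    κ ≤ γ / 2 := by
  have hγ2 : γ / 2 = ∑ m, ∑ n, if n < m then (W m n * π n + W n m * π m) / 2 else 0 := by
    rw [hγ, Finset.sum_div]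
    refine Finset.sum_congr rfl fun m _ => ?_
    rw [Finset.sum_div]
    refine Finset.sum_congr rfl fun n _ => ?_
    split_ifs <;> simp
  rw [hκ, hγ2]
  refine Finset.sum_le_sum fun m _ => Finset.sum_le_sum fun n _ => ?_
  split_ifs with h1 h2 h2
  · -- n < m and 0 < W m n
    obtain ⟨hlt, hpos⟩ := h1
    have hmn : m ≠ n := (ne_of_lt hlt).symm
    have hpos' : 0 < W n m := (hW_sign m n hmn).mp hpos
    exact logmean_le _ _ (mul_pos hpos (hπ_pos n)) (mul_pos hpos' (hπ_pos m))
      (hW_ne m n hlt hpos)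
  · exact absurd h1.1 h2
  · -- n < m but ¬ 0 < W m n, so both rates vanish
    have hmn : m ≠ n := (ne_of_lt h2).symm
    have hWmn : W m n = 0 := le_antisymm (not_lt.mp fun hc => h1 ⟨h2, hc⟩) (hW_off m n hmn)
    have hWnm : W n m = 0 := by
      by_contra hc
      have : 0 < W n m := lt_of_le_of_ne (hW_off n m hmn.symm) (Ne.symm hc)
      exact h1 ⟨h2, (hW_sign m n hmn).mpr this⟩
    simp [hWmn, hWnm]
  · exact le_refl 0
end

section
/- Let W be the transition rate matrix of a continuous-time Markov jump process in a steady state π with spectral gap g and dynamical activity rate γ. Then for every τ ≥ 0 and all observables a, b ∈ ℝ^N, D_{ba}^τ ≤ 2 e^{−gτ} ‖a‖_* ‖b‖_* √γ. -/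
open Matrix
open NormedSpace

-- exp of matrix applied to eigenvector
lemma exp_mulVec_eigen {N : ℕ} (M : Matrix (Fin N) (Fin N) ℂ) (x : Fin N → ℂ) (μ : ℂ)
    (h : M.mulVec x = μ • x) :
    (exp M).mulVec x = Complex.exp μ • x := by
  letI : SeminormedRing (Matrix (Fin N) (Fin N) ℂ) := Matrix.linftyOpSemiNormedRing
  letI : NormedRing (Matrix (Fin N) (Fin N) ℂ) := Matrix.linftyOpNormedRing
  letI : NormedAlgebra ℂ (Matrix (Fin N) (Fin N) ℂ) := Matrix.linftyOpNormedAlgebra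
  have hpow : ∀ k : ℕ, (M ^ k).mulVec x = μ ^ k • x := by
    intro k
    induction k with
    | zero => simp [Matrix.one_mulVec]
    | succ k ih =>
        rw [pow_succ', ← Matrix.mulVec_mulVec, ih, Matrix.mulVec_smul, h, smul_smul, ← pow_succ]
  have hsum : Summable fun k : ℕ => (Nat.factorial k : ℂ)⁻¹ • M ^ k := expSeries_summable' M
  let L : Matrix (Fin N) (Fin N) ℂ →ₗ[ℂ] (Fin N → ℂ) :=
    { toFun := fun A => A.mulVec x
      map_add' := fun A B => Matrix.add_mulVec A B x
      map_smul' := fun c A => Matrix.smul_mulVec c A x }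
  let Lc : Matrix (Fin N) (Fin N) ℂ →L[ℂ] (Fin N → ℂ) := LinearMap.toContinuousLinearMap L
  have h1 : (exp M).mulVec x = Lc (∑' k : ℕ, (Nat.factorial k : ℂ)⁻¹ • M ^ k) := by
    rw [exp_eq_tsum ℂ]; rfl
  rw [h1, Lc.map_tsum hsum]
  have h2 : ∀ k : ℕ, Lc ((Nat.factorial k : ℂ)⁻¹ • M ^ k) = ((Nat.factorial k : ℂ)⁻¹ * μ ^ k) • x := by
    intro k
    rw [Lc.map_smul]
    show (Nat.factorial k : ℂ)⁻¹ • (M ^ k).mulVec x = _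
    rw [hpow, smul_smul]
  simp_rw [h2]
  have hsμ : Summable fun k : ℕ => (Nat.factorial k : ℂ)⁻¹ * μ ^ k := by
    simpa [smul_eq_mul] using expSeries_summable' (𝕂 := ℂ) μ
  rw [hsμ.tsum_smul_const]
  congr 1
  rw [Complex.exp_eq_exp_ℂ, exp_eq_tsum ℂ]
  simp [smul_eq_mul]

lemma exp_map_complex {N : ℕ} (M : Matrix (Fin N) (Fin N) ℝ) :
    (exp M).map Complex.ofReal = exp (M.map Complex.ofReal) := by
  letI : SeminormedRing (Matrix (Fin N) (Fin N) ℝ) := Matrix.linftyOpSemiNormedRing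
  letI : NormedRing (Matrix (Fin N) (Fin N) ℝ) := Matrix.linftyOpNormedRing
  letI : NormedAlgebra ℝ (Matrix (Fin N) (Fin N) ℝ) := Matrix.linftyOpNormedAlgebra
  letI : SeminormedRing (Matrix (Fin N) (Fin N) ℂ) := Matrix.linftyOpSemiNormedRing
  letI : NormedRing (Matrix (Fin N) (Fin N) ℂ) := Matrix.linftyOpNormedRing
  letI : NormedAlgebra ℝ (Matrix (Fin N) (Fin N) ℂ) := Matrix.linftyOpNormedAlgebra
  letI : NormedAlgebra ℂ (Matrix (Fin N) (Fin N) ℂ) := Matrix.linftyOpNormedAlgebra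
  letI : NormedAlgebra ℚ (Matrix (Fin N) (Fin N) ℝ) := Matrix.linftyOpNormedAlgebra
  letI : NormedAlgebra ℚ (Matrix (Fin N) (Fin N) ℂ) := Matrix.linftyOpNormedAlgebra
  let φ : Matrix (Fin N) (Fin N) ℝ →ₐ[ℝ] Matrix (Fin N) (Fin N) ℂ :=
    AlgHom.mapMatrix Complex.ofRealAm
  have hφcont : Continuous φ := φ.toLinearMap.continuous_of_finiteDimensional
  have h1 : φ (exp M) = exp (φ M) := map_exp φ hφcont M
  have h2 : (exp : Matrix (Fin N) (Fin N) ℂ → _) = exp := rfl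
  show φ (exp M) = exp (φ M)
  rw [h1, h2]

/-- **Exponential decay of `D_{ba}^τ`:** `D_{ba}^τ ≤ 2 e^{−gτ} ‖a‖_* ‖b‖_* √γ`, where `g` is
the spectral gap and `γ` the dynamical activity rate. -/
theorem Dba_le_exp_decay
    (N : ℕ) (W : Matrix (Fin N) (Fin N) ℝ)
    (hW_off : ∀ m n : Fin N, m ≠ n → 0 ≤ W m n)
    (hW_diag : ∀ n : Fin N, W n n = -∑ m ∈ Finset.univ.erase n, W m n)
    (π : Fin N → ℝ) (hπ_pos : ∀ n, 0 < π n) (hπ_sum : ∑ n, π n = 1)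
    (hstat : W.mulVec π = 0)
    -- spectral decomposition of `W` by left eigenvectors
    (g : ℝ) (hg : 0 < g)
    (lam : Fin N → ℂ) (v : Fin N → Fin N → ℂ) (n₀ : Fin N)
    (hlam₀ : lam n₀ = 0)
    (hv₀ : ∃ c : ℂ, v n₀ = fun _ => c)
    (hgap : ∀ n, n ≠ n₀ → (lam n).re ≤ -g)
    (heig : ∀ n, Matrix.vecMul (star (v n)) (W.map (Complex.ofReal)) = lam n • star (v n))
    (hnorm : ∀ n, ∑ i, Complex.normSq (v n i) = 1)
    (hbasis : LinearIndependent ℂ v)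
    -- dynamical activity rate
    (γ : ℝ)
    (hγ : γ = ∑ m, ∑ n, if n < m then W m n * π n + W n m * π m else 0)
    -- observables, their expansions, and their (projected) time evolutions
    (τ : ℝ) (hτ : 0 ≤ τ) (a b : Fin N → ℝ) (ta tb : Fin N → ℂ)
    (hta : (fun i => (a i : ℂ)) = ∑ n, ta n • v n)
    (htb : (fun i => (b i : ℂ)) = ∑ n, tb n • v n)
    (af bf : ℝ → Fin N → ℝ)
    (haf : ∀ t n, af t n = (NormedSpace.exp (t • Wᵀ)).mulVec a n - ∑ m, π m * a m)
    (hbf : ∀ t n, bf t n = (NormedSpace.exp (t • Wᵀ)).mulVec b n - ∑ m, π m * b m)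
    (Dba : ℝ)
    (hD : Dba = ∫ s in (0:ℝ)..1, Real.sqrt (∑ m, ∑ n, if n < m then
        (af ((1 - s) * τ) n * bf (s * τ) m - af ((1 - s) * τ) m * bf (s * τ) n) ^ 2 *
          (W m n * π n + W n m * π m) else 0)) :
    Dba ≤ 2 * Real.exp (-(g * τ)) *
        (∑ n ∈ Finset.univ.erase n₀, ‖ta n‖) *
        (∑ n ∈ Finset.univ.erase n₀, ‖tb n‖) * Real.sqrt γ := by
  classical
  obtain ⟨c, hc⟩ := hv₀
  set Wc : Matrix (Fin N) (Fin N) ℂ := W.map Complex.ofReal with hWcdef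
  set A : ℝ := ∑ n ∈ Finset.univ.erase n₀, ‖ta n‖ with hA
  set B : ℝ := ∑ n ∈ Finset.univ.erase n₀, ‖tb n‖ with hB
  have hA0 : 0 ≤ A := Finset.sum_nonneg fun n _ => norm_nonneg _
  have hB0 : 0 ≤ B := Finset.sum_nonneg fun n _ => norm_nonneg _
  -- right eigenvectors of the transpose
  have heig' : ∀ n, Wcᵀ.mulVec (v n) = (starRingEnd ℂ) (lam n) • v n := by
    intro n
    funext i
    have h := congrArg (starRingEnd ℂ) (congrFun (heig n) i)
    rw [Matrix.mulVec_transpose]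
    simp only [Matrix.vecMul, dotProduct, Pi.star_apply, Pi.smul_apply, smul_eq_mul,
      map_sum, _root_.map_mul, Complex.conj_conj] at h ⊢
    have hWre : ∀ j, (starRingEnd ℂ) (Wc j i) = Wc j i := by
      intro j; simp [hWcdef, Matrix.map_apply, Complex.conj_ofReal]
    simp only [hWre] at h
    simpa [mul_comm] using h
  -- the exp formula
  have hexp : ∀ (t : ℝ) (x : Fin N → ℝ) (tx : Fin N → ℂ),
      ((fun i => (x i : ℂ)) = ∑ n, tx n • v n) → ∀ i,
      (((NormedSpace.exp (t • Wᵀ)).mulVec x i : ℝ) : ℂ)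
        = ∑ n, tx n * Complex.exp ((t : ℂ) * (starRingEnd ℂ) (lam n)) * v n i := by
    intro t x tx htx i
    have hmapc : ((NormedSpace.exp (t • Wᵀ)).mulVec x i : ℂ)
        = ((NormedSpace.exp (t • Wᵀ)).map Complex.ofReal).mulVec (fun j => (x j : ℂ)) i := by
      simp only [Matrix.mulVec, dotProduct, Matrix.map_apply]
      push_cast
      rfl
    have hsmulmap : (t • Wᵀ).map Complex.ofReal = (t : ℂ) • Wcᵀ := by
      funext i' j'
      simp [Matrix.map_apply, hWcdef, Matrix.transpose_apply]
    rw [hmapc, exp_map_complex, hsmulmap, htx]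
    have heigexp : ∀ n, (NormedSpace.exp ((t : ℂ) • Wcᵀ)).mulVec (v n)
        = Complex.exp ((t : ℂ) * (starRingEnd ℂ) (lam n)) • v n := by
      intro n
      apply exp_mulVec_eigen
      rw [Matrix.smul_mulVec, heig' n, smul_smul]
    have : (NormedSpace.exp ((t : ℂ) • Wcᵀ)).mulVec (∑ n, tx n • v n)
        = ∑ n, tx n • (Complex.exp ((t : ℂ) * (starRingEnd ℂ) (lam n)) • v n) := by
      rw [show (NormedSpace.exp ((t : ℂ) • Wcᵀ)).mulVec (∑ n, tx n • v n)
          = (Matrix.mulVecLin (NormedSpace.exp ((t : ℂ) • Wcᵀ))) (∑ n, tx n • v n) from rfl,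
        map_sum]
      refine Finset.sum_congr rfl fun n _ => ?_
      rw [LinearMap.map_smul]
      simp only [Matrix.mulVecLin_apply]
      rw [heigexp n]
    rw [this]
    simp [Finset.sum_apply, mul_assoc, mul_comm, mul_left_comm]
  -- stationarity, complexified
  have hπc : Wc.mulVec (fun i => (π i : ℂ)) = 0 := by
    funext i
    have h := congrFun hstat i
    simp only [Matrix.mulVec, dotProduct, Matrix.map_apply, Pi.zero_apply, hWcdef] at h ⊢
    push_cast
    exact_mod_cast congrArg (Complex.ofReal) h
  -- orthogonality to π
  have horth : ∀ n, n ≠ n₀ → (dotProduct (v n) (fun i => (π i : ℂ))) = 0 := by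
    intro n hn
    have h1 : dotProduct (v n) (Wc.mulVec (fun i => (π i : ℂ))) = 0 := by
      rw [hπc]; simp [dotProduct]
    rw [Matrix.dotProduct_mulVec, ← Matrix.mulVec_transpose, heig' n,
      smul_dotProduct] at h1
    have hne : (starRingEnd ℂ) (lam n) ≠ 0 := by
      intro hz
      have : (lam n).re = 0 := by
        have := congrArg Complex.re hz
        simpa using this
      have := hgap n hn; linarith
    exact (smul_eq_zero.mp h1).resolve_left hne |>.symm ▸ rfl
  -- projection onto the stationary component
  have hπc1 : (∑ m, ((π m : ℂ))) = 1 := by exact_mod_cast congrArg Complex.ofReal hπ_sum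
  have hpa : ∀ (x : Fin N → ℝ) (tx : Fin N → ℂ),
      ((fun i => (x i : ℂ)) = ∑ n, tx n • v n) →
      ((∑ m, π m * x m : ℝ) : ℂ) = tx n₀ * c := by
    intro x tx htx
    have h2 : ∀ m, (x m : ℂ) = ∑ n, tx n * v n m := by
      intro m
      have := congrFun htx m
      simpa [Finset.sum_apply] using this
    calc ((∑ m, π m * x m : ℝ) : ℂ) = ∑ m, (π m : ℂ) * (x m : ℂ) := by push_cast; rfl
    _ = ∑ n, tx n * ∑ m, v n m * (π m : ℂ) := by
        simp_rw [h2, Finset.mul_sum]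
        rw [Finset.sum_comm]
        refine Finset.sum_congr rfl fun n _ => ?_
        exact Finset.sum_congr rfl fun m _ => by ring
    _ = tx n₀ * ∑ m, v n₀ m * (π m : ℂ) := by
        refine Finset.sum_eq_single n₀ (fun n _ hn => ?_) (by simp)
        rw [show (∑ m, v n m * (π m : ℂ)) = dotProduct (v n) (fun i => (π i : ℂ)) from rfl,
          horth n hn, mul_zero]
    _ = tx n₀ * c := by
        rw [hc]
        simp only [← Finset.mul_sum]
        rw [hπc1, mul_one]
  -- the projected evolution formula
  have hafc : ∀ (t : ℝ) (x : Fin N → ℝ) (tx : Fin N → ℂ),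
      ((fun i => (x i : ℂ)) = ∑ n, tx n • v n) → ∀ i,
      ((((NormedSpace.exp (t • Wᵀ)).mulVec x i - ∑ m, π m * x m : ℝ)) : ℂ)
        = ∑ n ∈ Finset.univ.erase n₀,
            tx n * Complex.exp ((t : ℂ) * (starRingEnd ℂ) (lam n)) * v n i := by
    intro t x tx htx i
    rw [Complex.ofReal_sub, hexp t x tx htx i, hpa x tx htx,
      ← Finset.sum_erase_add Finset.univ _ (Finset.mem_univ n₀)]
    simp [hlam₀, hc]
  -- eigenvector components are bounded by 1
  have hvle : ∀ n i, ‖v n i‖ ≤ 1 := by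
    intro n i
    have h1 : Complex.normSq (v n i) ≤ 1 := by
      rw [← hnorm n]
      exact Finset.single_le_sum (f := fun j => Complex.normSq (v n j))
        (fun j _ => Complex.normSq_nonneg _) (Finset.mem_univ i)
    rw [Complex.norm_def]
    calc Real.sqrt (Complex.normSq (v n i)) ≤ Real.sqrt 1 := Real.sqrt_le_sqrt h1
    _ = 1 := Real.sqrt_one
  -- the decay bound
  have hbnd : ∀ (t : ℝ), 0 ≤ t → ∀ (x : Fin N → ℝ) (tx : Fin N → ℂ),
      ((fun i => (x i : ℂ)) = ∑ n, tx n • v n) → ∀ i,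
      |(NormedSpace.exp (t • Wᵀ)).mulVec x i - ∑ m, π m * x m|
        ≤ Real.exp (-(g*t)) * ∑ n ∈ Finset.univ.erase n₀, ‖tx n‖ := by
    intro t ht x tx htx i
    have h1 := hafc t x tx htx i
    have h2 : |(NormedSpace.exp (t • Wᵀ)).mulVec x i - ∑ m, π m * x m|
        = ‖((((NormedSpace.exp (t • Wᵀ)).mulVec x i - ∑ m, π m * x m : ℝ)) : ℂ)‖ :=
      ((Complex.norm_real _).trans (Real.norm_eq_abs _)).symm
    rw [h2, h1]
    calc ‖∑ n ∈ Finset.univ.erase n₀,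
          tx n * Complex.exp ((t : ℂ) * (starRingEnd ℂ) (lam n)) * v n i‖
        ≤ ∑ n ∈ Finset.univ.erase n₀,
            ‖tx n * Complex.exp ((t : ℂ) * (starRingEnd ℂ) (lam n)) * v n i‖ :=
          norm_sum_le _ _
      _ ≤ ∑ n ∈ Finset.univ.erase n₀, ‖tx n‖ * Real.exp (-(g*t)) := by
          refine Finset.sum_le_sum fun n hn => ?_
          rw [norm_mul, norm_mul, Complex.norm_exp]
          have hre : ((t : ℂ) * (starRingEnd ℂ) (lam n)).re = t * (lam n).re := by
            simp [Complex.mul_re]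
          rw [hre]
          have hexple : Real.exp (t * (lam n).re) ≤ Real.exp (-(g*t)) := by
            apply Real.exp_le_exp.mpr
            have := hgap n (Finset.ne_of_mem_erase hn)
            nlinarith
          calc ‖tx n‖ * Real.exp (t * (lam n).re) * ‖v n i‖
              ≤ ‖tx n‖ * Real.exp (-(g*t)) * 1 := by
                apply mul_le_mul (mul_le_mul le_rfl hexple (Real.exp_nonneg _)
                  (norm_nonneg _)) (hvle n i) (norm_nonneg _)
                positivity
            _ = ‖tx n‖ * Real.exp (-(g*t)) := mul_one _
      _ = Real.exp (-(g*t)) * ∑ n ∈ Finset.univ.erase n₀, ‖tx n‖ := by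
          rw [← Finset.sum_mul, mul_comm]
  have hafle : ∀ t, 0 ≤ t → ∀ i, |af t i| ≤ Real.exp (-(g*t)) * A := by
    intro t ht i; rw [haf]; exact hbnd t ht a ta hta i
  have hbfle : ∀ t, 0 ≤ t → ∀ i, |bf t i| ≤ Real.exp (-(g*t)) * B := by
    intro t ht i; rw [hbf]; exact hbnd t ht b tb htb i
  -- continuity
  have hafrepr : ∀ (x : Fin N → ℝ) (tx : Fin N → ℂ),
      ((fun i => (x i : ℂ)) = ∑ n, tx n • v n) → ∀ (t : ℝ) (i : Fin N),
      (NormedSpace.exp (t • Wᵀ)).mulVec x i - ∑ m, π m * x m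
        = (∑ n ∈ Finset.univ.erase n₀,
            tx n * Complex.exp ((t : ℂ) * (starRingEnd ℂ) (lam n)) * v n i).re := by
    intro x tx htx t i
    rw [← hafc t x tx htx i, Complex.ofReal_re]
  have hcontaux : ∀ (tx : Fin N → ℂ) (i : Fin N), Continuous fun t : ℝ =>
      (∑ n ∈ Finset.univ.erase n₀,
          tx n * Complex.exp ((t : ℂ) * (starRingEnd ℂ) (lam n)) * v n i).re := by
    intro tx i
    apply Complex.continuous_re.comp
    apply continuous_finset_sum
    intro n _
    exact ((continuous_const.mul (Complex.continuous_exp.comp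
      (Complex.continuous_ofReal.mul continuous_const))).mul continuous_const)
  have hafcont : ∀ i, Continuous fun s : ℝ => af ((1-s)*τ) i := by
    intro i
    have : (fun s : ℝ => af ((1-s)*τ) i) = (fun t : ℝ =>
        (∑ n ∈ Finset.univ.erase n₀,
          ta n * Complex.exp ((t : ℂ) * (starRingEnd ℂ) (lam n)) * v n i).re)
        ∘ (fun s : ℝ => (1-s)*τ) := by
      funext s
      simp only [Function.comp_apply]
      rw [haf, hafrepr a ta hta]
    rw [this]
    exact (hcontaux ta i).comp ((continuous_const.sub continuous_id).mul continuous_const)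
  have hbfcont : ∀ i, Continuous fun s : ℝ => bf (s*τ) i := by
    intro i
    have : (fun s : ℝ => bf (s*τ) i) = (fun t : ℝ =>
        (∑ n ∈ Finset.univ.erase n₀,
          tb n * Complex.exp ((t : ℂ) * (starRingEnd ℂ) (lam n)) * v n i).re)
        ∘ (fun s : ℝ => s*τ) := by
      funext s
      simp only [Function.comp_apply]
      rw [hbf, hafrepr b tb htb]
    rw [this]
    exact (hcontaux tb i).comp (continuous_id.mul continuous_const)
  set C : ℝ := 2 * Real.exp (-(g*τ)) * A * B with hCdef
  have hC0 : 0 ≤ C := by positivity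
  set F : ℝ → ℝ := fun s => Real.sqrt (∑ m, ∑ n, if n < m then
      (af ((1 - s) * τ) n * bf (s * τ) m - af ((1 - s) * τ) m * bf (s * τ) n) ^ 2 *
        (W m n * π n + W n m * π m) else 0) with hFdef
  have hFcont : Continuous F := by
    apply Real.continuous_sqrt.comp
    apply continuous_finset_sum
    intro m _
    apply continuous_finset_sum
    intro n _
    by_cases h : n < m
    · simp only [if_pos h]
      exact ((((hafcont n).mul (hbfcont m)).sub ((hafcont m).mul (hbfcont n))).pow 2).mul
        continuous_const
    · simp only [if_neg h]
      exact continuous_const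
  have hγmn : ∀ m n : Fin N, n < m → 0 ≤ W m n * π n + W n m * π m := by
    intro m n h
    have h1 : n ≠ m := ne_of_lt h
    have := hW_off m n (Ne.symm h1)
    have := hW_off n m h1
    have := (hπ_pos n).le
    have := (hπ_pos m).le
    positivity
  have hFle : ∀ s ∈ Set.Icc (0:ℝ) 1, F s ≤ C * Real.sqrt γ := by
    intro s hs
    obtain ⟨hs0, hs1⟩ := hs
    have ht1 : 0 ≤ (1-s)*τ := mul_nonneg (by linarith) hτ
    have ht2 : 0 ≤ s*τ := mul_nonneg hs0 hτ
    have hEmul : Real.exp (-(g*((1-s)*τ))) * Real.exp (-(g*(s*τ))) = Real.exp (-(g*τ)) := by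
      rw [← Real.exp_add]
      congr 1
      ring
    have hsum_le : (∑ m, ∑ n, if n < m then
        (af ((1 - s) * τ) n * bf (s * τ) m - af ((1 - s) * τ) m * bf (s * τ) n) ^ 2 *
          (W m n * π n + W n m * π m) else 0) ≤ C^2 * γ := by
      rw [hγ, Finset.mul_sum]
      refine Finset.sum_le_sum fun m _ => ?_
      rw [Finset.mul_sum]
      refine Finset.sum_le_sum fun n _ => ?_
      by_cases h : n < m
      · simp only [if_pos h, mul_ite, mul_zero]
        apply mul_le_mul_of_nonneg_right _ (hγmn m n h)
        have hd : |af ((1 - s) * τ) n * bf (s * τ) m - af ((1 - s) * τ) m * bf (s * τ) n| ≤ C := by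
          calc |af ((1 - s) * τ) n * bf (s * τ) m - af ((1 - s) * τ) m * bf (s * τ) n|
              ≤ |af ((1 - s) * τ) n * bf (s * τ) m| + |af ((1 - s) * τ) m * bf (s * τ) n| :=
                abs_sub _ _
            _ = |af ((1 - s) * τ) n| * |bf (s * τ) m| + |af ((1 - s) * τ) m| * |bf (s * τ) n| := by
                rw [abs_mul, abs_mul]
            _ ≤ (Real.exp (-(g*((1-s)*τ))) * A) * (Real.exp (-(g*(s*τ))) * B)
                + (Real.exp (-(g*((1-s)*τ))) * A) * (Real.exp (-(g*(s*τ))) * B) := by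
                have e1 := mul_le_mul (hafle _ ht1 n) (hbfle _ ht2 m) (abs_nonneg _)
                  (by positivity)
                have e2 := mul_le_mul (hafle _ ht1 m) (hbfle _ ht2 n) (abs_nonneg _)
                  (by positivity)
                exact add_le_add e1 e2
            _ = C := by rw [hCdef]; rw [← hEmul]; ring
        calc (af ((1 - s) * τ) n * bf (s * τ) m - af ((1 - s) * τ) m * bf (s * τ) n) ^ 2
            = |af ((1 - s) * τ) n * bf (s * τ) m - af ((1 - s) * τ) m * bf (s * τ) n| ^ 2 := by
              rw [sq_abs]
          _ ≤ C ^ 2 := by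
              apply pow_le_pow_left₀ (abs_nonneg _) hd
      · simp [h]
    calc F s ≤ Real.sqrt (C^2 * γ) := Real.sqrt_le_sqrt hsum_le
      _ = C * Real.sqrt γ := by
          rw [Real.sqrt_mul (sq_nonneg C), Real.sqrt_sq hC0]
  rw [hD]
  have h1 : (∫ s in (0:ℝ)..1, F s) ≤ ∫ _s in (0:ℝ)..1, C * Real.sqrt γ :=
    intervalIntegral.integral_mono_on (by norm_num) (hFcont.intervalIntegrable 0 1)
      (intervalIntegrable_const) hFle
  calc (∫ s in (0:ℝ)..1, F s) ≤ ∫ _s in (0:ℝ)..1, C * Real.sqrt γ := h1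
    _ = C * Real.sqrt γ := by simp
    _ = 2 * Real.exp (-(g * τ)) * A * B * Real.sqrt γ := by rw [hCdef]
end

section
/- Let R be the column-stochastic transition matrix of a time-homogeneous discrete-time Markov chain with stationary distribution π, spectral gap g = −ln|λ₂|, and per-step entropy production σ and dynamical activity γ. Then for every integer K ≥ 1 and all observables a, b ∈ ℝ^N, the asymmetry of the K-step cross-correlation obeys |δC_{ba}^{K}| ≤ K e^{−(K−1)g} ‖a‖_* ‖b‖_* · σ / Φ(σ/(2γ)). (If σ = 0 both sides vanish.) -/
open Matrix


/-- Log-sum inequality. -/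
lemma log_sum_ineq {ι : Type*} (s : Finset ι) (p q : ι → ℝ)
    (hp : ∀ i ∈ s, 0 < p i) (hq : ∀ i ∈ s, 0 < q i) :
    (∑ i ∈ s, p i) * Real.log ((∑ i ∈ s, p i) / (∑ i ∈ s, q i)) ≤
      ∑ i ∈ s, p i * Real.log (p i / q i) := by
  rcases s.eq_empty_or_nonempty with rfl | hne
  · simp
  set P := ∑ i ∈ s, p i with hP
  set Q := ∑ i ∈ s, q i with hQ
  have hPpos : 0 < P := Finset.sum_pos hp hne
  have hQpos : 0 < Q := Finset.sum_pos hq hne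
  have key : ∀ i ∈ s, p i * Real.log (P / Q) - p i * Real.log (p i / q i)
      ≤ q i * (P / Q) - p i := by
    intro i hi
    have hpi := hp i hi
    have hqi := hq i hi
    have hx : 0 < q i * P / (p i * Q) := by positivity
    have h1 : Real.log (q i * P / (p i * Q)) ≤ q i * P / (p i * Q) - 1 :=
      Real.log_le_sub_one_of_pos hx
    have h2 : Real.log (q i * P / (p i * Q)) = Real.log (P / Q) - Real.log (p i / q i) := by
      rw [Real.log_div (by positivity : (q i * P : ℝ) ≠ 0) (by positivity : (p i * Q : ℝ) ≠ 0),
        Real.log_div hPpos.ne' hQpos.ne', Real.log_div hpi.ne' hqi.ne',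
        Real.log_mul hqi.ne' hPpos.ne', Real.log_mul hpi.ne' hQpos.ne']
      ring
    have h3 : p i * Real.log (P / Q) - p i * Real.log (p i / q i)
        = p i * Real.log (q i * P / (p i * Q)) := by rw [h2]; ring
    rw [h3]
    have h4 := mul_le_mul_of_nonneg_left h1 hpi.le
    calc p i * Real.log (q i * P / (p i * Q)) ≤ p i * (q i * P / (p i * Q) - 1) := h4
      _ = q i * (P / Q) - p i := by field_simp
  have hsum := Finset.sum_le_sum key
  rw [Finset.sum_sub_distrib, Finset.sum_sub_distrib, ← Finset.sum_mul, ← Finset.sum_mul] at hsum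
  have hQPQ : (∑ i ∈ s, q i) * (P / Q) = P := by
    rw [← hQ]; field_simp
  rw [hQPQ] at hsum
  linarith

lemma tanh_formula (u : ℝ) : Real.tanh u = (Real.exp (2*u) - 1) / (Real.exp (2*u) + 1) := by
  rw [Real.tanh_eq_sinh_div_cosh, Real.sinh_eq, Real.cosh_eq]
  have h1 : Real.exp u ≠ 0 := Real.exp_ne_zero u
  have h2 : Real.exp (2*u) = Real.exp u * Real.exp u := by
    rw [two_mul, Real.exp_add]
  have h3 : Real.exp (2*u) + 1 ≠ 0 := by positivity
  rw [h2] at h3 ⊢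
  rw [Real.exp_neg u]
  field_simp

lemma thermo_core (P Q γ σ u : ℝ) (hQ : 0 < Q) (hPQ : Q ≤ P) (hγ : P + Q ≤ γ)
    (hu : 0 ≤ u) (hσ1 : (P - Q) * Real.log (P / Q) ≤ σ)
    (hs : u * Real.tanh u = σ / (2 * γ)) :
    2 * (P - Q) * u ≤ σ := by
  have hγpos : 0 < γ := lt_of_lt_of_le (by linarith) hγ
  have hP : 0 < P := lt_of_lt_of_le hQ hPQ
  have htanh : 0 ≤ Real.tanh u := by
    rw [tanh_formula]
    have : (1:ℝ) ≤ Real.exp (2*u) := by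
      rw [← Real.exp_zero]; exact Real.exp_le_exp.mpr (by linarith)
    have h3 : (0:ℝ) < Real.exp (2*u) + 1 := by positivity
    apply div_nonneg (by linarith) h3.le
  by_cases hcase : P - Q ≤ γ * Real.tanh u
  · have h5 : 2 * (P - Q) * u ≤ 2 * (γ * Real.tanh u) * u := by
      apply mul_le_mul_of_nonneg_right _ hu
      linarith
    calc 2 * (P - Q) * u ≤ 2 * (γ * Real.tanh u) * u := h5
      _ = 2 * γ * (u * Real.tanh u) := by ring
      _ = 2 * γ * (σ / (2 * γ)) := by rw [hs]
      _ = σ := by field_simp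
  · push_neg at hcase
    have hPQ2 : (P + Q) * Real.tanh u ≤ γ * Real.tanh u :=
      mul_le_mul_of_nonneg_right hγ htanh
    have hkey : (P + Q) * Real.tanh u < P - Q := lt_of_le_of_lt hPQ2 hcase
    have hexp : Q * Real.exp (2*u) < P := by
      rw [tanh_formula, ← mul_div_assoc] at hkey
      have h3 : (0:ℝ) < Real.exp (2*u) + 1 := by positivity
      rw [div_lt_iff₀ h3] at hkey
      nlinarith
    have hlog : 2 * u ≤ Real.log (P / Q) := by
      rw [Real.le_log_iff_exp_le (by positivity : (0:ℝ) < P / Q), le_div_iff₀ hQ]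
      calc Real.exp (2*u) * Q = Q * Real.exp (2*u) := by ring
        _ ≤ P := hexp.le
    have hPQnn : 0 ≤ P - Q := by linarith
    calc 2 * (P - Q) * u = (P - Q) * (2 * u) := by ring
      _ ≤ (P - Q) * Real.log (P / Q) := mul_le_mul_of_nonneg_left hlog hPQnn
      _ ≤ σ := hσ1

lemma current_bound {ι : Type*} [Fintype ι] [DecidableEq ι]
    (p : ι × ι → ℝ) (hp : ∀ e, 0 ≤ p e)
    (hsign : ∀ e : ι × ι, e.1 ≠ e.2 → (0 < p e ↔ 0 < p e.swap))
    (σ γ u : ℝ)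
    (hσ : σ = ∑ e ∈ Finset.univ.filter (fun e : ι × ι => e.1 ≠ e.2),
        p e * Real.log (p e / p e.swap))
    (hγ : γ = ∑ e ∈ Finset.univ.filter (fun e : ι × ι => e.1 ≠ e.2), p e)
    (hu : 0 ≤ σ / (2 * γ) → 0 ≤ u) (hs : 0 ≤ σ / (2 * γ) → u * Real.tanh u = σ / (2 * γ)) :
    0 ≤ σ ∧ (∑ e ∈ Finset.univ.filter (fun e : ι × ι => e.1 ≠ e.2), |p e - p e.swap|) * u ≤ σ
      ∧ (σ = 0 → (∑ e ∈ Finset.univ.filter (fun e : ι × ι => e.1 ≠ e.2), |p e - p e.swap|) = 0) := by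
  classical
  set D : Finset (ι × ι) := Finset.univ.filter (fun e : ι × ι => e.1 ≠ e.2) with hD
  set E : Finset (ι × ι) := D.filter (fun e => p e.swap < p e) with hE
  set E' : Finset (ι × ι) := D.filter (fun e => p e < p e.swap) with hE'
  have hswapD : ∀ e ∈ D, e.swap ∈ D := by
    intro e he
    simp only [hD, Finset.mem_filter, Finset.mem_univ, true_and] at he ⊢
    exact fun h => he (by simpa [Prod.ext_iff] using h.symm)
  have hbijEE' : ∀ (f : ι × ι → ℝ), (∑ e ∈ E', f e) = ∑ e ∈ E, f e.swap := by
    intro f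
    apply Finset.sum_nbij' (fun e => e.swap) (fun e => e.swap)
    · intro e he
      simp only [hE', Finset.mem_filter] at he
      simp only [hE, Finset.mem_filter]
      exact ⟨hswapD e he.1, by simpa using he.2⟩
    · intro e he
      simp only [hE, Finset.mem_filter] at he
      simp only [hE', Finset.mem_filter]
      exact ⟨hswapD e he.1, by simpa using he.2⟩
    · intro e _; simp
    · intro e _; simp
    · intro e _; simp
  -- split of a sum over D whose terms vanish when p e = p e.swap
  have hsplit : ∀ (f : ι × ι → ℝ), (∀ e ∈ D, p e = p e.swap → f e = 0) →
      (∑ e ∈ D, f e) = (∑ e ∈ E, f e) + ∑ e ∈ E', f e := by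
    intro f hf
    rw [← Finset.sum_filter_add_sum_filter_not D (fun e => p e.swap < p e) f]
    congr 1
    rw [← Finset.sum_filter_add_sum_filter_not (D.filter (fun e => ¬ p e.swap < p e))
        (fun e => p e < p e.swap) f]
    have h0 : ∑ e ∈ (D.filter (fun e => ¬ p e.swap < p e)).filter
        (fun e => ¬ p e < p e.swap), f e = 0 := by
      apply Finset.sum_eq_zero
      intro e he
      simp only [Finset.mem_filter] at he
      exact hf e he.1.1 (le_antisymm (not_lt.mp he.1.2) (not_lt.mp he.2))
    rw [h0, add_zero]
    congr 1
    rw [hE', Finset.filter_filter]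
    apply Finset.filter_congr
    intro e _
    constructor
    · intro h; exact h.2
    · intro h; exact ⟨not_lt.mpr h.le, h⟩
  have hposE : ∀ e ∈ E, 0 < p e.swap ∧ p e.swap < p e := by
    intro e he
    simp only [hE, hD, Finset.mem_filter, Finset.mem_univ, true_and] at he
    obtain ⟨hne, hlt⟩ := he
    have hpe : 0 < p e := lt_of_le_of_lt (hp e.swap) hlt
    exact ⟨(hsign e hne).mp hpe, hlt⟩
  set P := ∑ e ∈ E, p e with hP
  set Q := ∑ e ∈ E, p e.swap with hQ
  have hQP : Q ≤ P := Finset.sum_le_sum (fun e he => (hposE e he).2.le)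
  have hSA : (∑ e ∈ D, |p e - p e.swap|) = 2 * (P - Q) := by
    rw [hsplit _ (fun e _ h => by rw [h, sub_self, abs_zero]), hbijEE']
    have h1 : ∑ e ∈ E, |p e - p e.swap| = P - Q := by
      rw [hP, hQ, ← Finset.sum_sub_distrib]
      apply Finset.sum_congr rfl
      intro e he
      exact abs_of_pos (by linarith [(hposE e he).2])
    have h2 : ∑ e ∈ E, |p e.swap - p e.swap.swap| = P - Q := by
      rw [hP, hQ, ← Finset.sum_sub_distrib]
      apply Finset.sum_congr rfl
      intro e he
      rw [Prod.swap_swap]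
      rw [abs_sub_comm]
      exact abs_of_pos (by linarith [(hposE e he).2])
    rw [h1, h2]; ring
  have hσE : σ = (∑ e ∈ E, p e * Real.log (p e / p e.swap))
      + ∑ e ∈ E, p e.swap * Real.log (p e.swap / p e) := by
    have hvanish : ∀ e ∈ D, p e = p e.swap → p e * Real.log (p e / p e.swap) = 0 := by
      intro e _ h
      by_cases h0 : p e = 0
      · rw [h0, zero_mul]
      · rw [h, div_self (fun hc => h0 (h.trans hc)), Real.log_one, mul_zero]
    rw [hσ, hsplit _ hvanish, hbijEE']
    congr 1
  rcases E.eq_empty_or_nonempty with hEe | hEne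
  · have hP0 : P = 0 := by rw [hP, hEe, Finset.sum_empty]
    have hQ0 : Q = 0 := by rw [hQ, hEe, Finset.sum_empty]
    have hσ0 : σ = 0 := by rw [hσE, hEe]; simp
    have hSA0 : (∑ e ∈ D, |p e - p e.swap|) = 0 := by rw [hSA, hP0, hQ0]; ring
    refine ⟨hσ0.ge, ?_, fun _ => hSA0⟩
    rw [hSA0, hσ0, zero_mul]
  · have hQpos : 0 < Q := Finset.sum_pos (fun e he => (hposE e he).1) hEne
    have hPpos : 0 < P := lt_of_lt_of_le hQpos hQP
    have hγPQ : P + Q ≤ γ := by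
      have hsub : E ∪ E' ⊆ D := by
        apply Finset.union_subset <;> exact Finset.filter_subset _ _
      have hdisj : Disjoint E E' := by
        rw [Finset.disjoint_left]
        intro e he he'
        simp only [hE, Finset.mem_filter] at he
        simp only [hE', Finset.mem_filter] at he'
        exact absurd he.2 (not_lt.mpr he'.2.le)
      have h1 : ∑ e ∈ E ∪ E', p e ≤ ∑ e ∈ D, p e :=
        Finset.sum_le_sum_of_subset_of_nonneg hsub (fun e _ _ => hp e)
      rw [Finset.sum_union hdisj, hbijEE'] at h1
      rw [hγ]
      rw [hP, hQ]; exact h1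
    have hls1 : P * Real.log (P / Q) ≤ ∑ e ∈ E, p e * Real.log (p e / p e.swap) := by
      have := log_sum_ineq E (fun e => p e) (fun e => p e.swap)
        (fun e he => lt_trans (hposE e he).1 (hposE e he).2)
        (fun e he => (hposE e he).1)
      exact this
    have hls2 : Q * Real.log (Q / P) ≤ ∑ e ∈ E, p e.swap * Real.log (p e.swap / p e) := by
      have := log_sum_ineq E (fun e => p e.swap) (fun e => p e)
        (fun e he => (hposE e he).1)
        (fun e he => lt_trans (hposE e he).1 (hposE e he).2)
      exact this
    have hlogQP : Real.log (Q / P) = - Real.log (P / Q) := by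
      rw [Real.log_div hQpos.ne' hPpos.ne', Real.log_div hPpos.ne' hQpos.ne']
      ring
    have hσ1 : (P - Q) * Real.log (P / Q) ≤ σ := by
      rw [hσE]
      have := add_le_add hls1 hls2
      calc (P - Q) * Real.log (P / Q)
          = P * Real.log (P / Q) + Q * Real.log (Q / P) := by rw [hlogQP]; ring
        _ ≤ _ := this
    have hσpos : 0 < σ := by
      rw [hσE, ← Finset.sum_add_distrib]
      apply Finset.sum_pos _ hEne
      intro e he
      obtain ⟨hqpos, hlt⟩ := hposE e he
      have hppos : 0 < p e := lt_trans hqpos hlt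
      have heq : p e * Real.log (p e / p e.swap) + p e.swap * Real.log (p e.swap / p e)
          = (p e - p e.swap) * (Real.log (p e) - Real.log (p e.swap)) := by
        rw [Real.log_div hppos.ne' hqpos.ne', Real.log_div hqpos.ne' hppos.ne']
        ring
      rw [heq]
      exact mul_pos (by linarith) (sub_pos.mpr (Real.log_lt_log hqpos hlt))
    have hγpos2 : 0 < γ := lt_of_lt_of_le (by linarith [hQpos, hPpos]) hγPQ
    have harg : 0 ≤ σ / (2 * γ) := by positivity
    have hcore := thermo_core P Q γ σ u hQpos hQP hγPQ (hu harg) hσ1 (hs harg)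
    refine ⟨hσpos.le, ?_, fun h0 => absurd h0 hσpos.ne'⟩
    rw [hSA]
    linarith
open Matrix

lemma eig_pow {N : ℕ} (M : Matrix (Fin N) (Fin N) ℂ) (w : Fin N → ℂ) (l : ℂ)
    (h : Matrix.vecMul w M = l • w) (j : ℕ) : Matrix.vecMul w (M ^ j) = l ^ j • w := by
  induction j with
  | zero => simp [Matrix.vecMul_one]
  | succ j ih =>
    rw [pow_succ, ← Matrix.vecMul_vecMul, ih, Matrix.smul_vecMul, h, pow_succ, smul_smul]

lemma cast_vecMul_pow {N : ℕ} (R : Matrix (Fin N) (Fin N) ℝ) (x : Fin N → ℝ) (j : ℕ) (i : Fin N) :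
    ((Matrix.vecMul x (R ^ j) i : ℝ) : ℂ)
      = Matrix.vecMul (fun k => (x k : ℂ)) ((R.map Complex.ofReal) ^ j) i := by
  have hmap : (R.map Complex.ofReal) ^ j = (R ^ j).map Complex.ofReal := by
    have := map_pow (Complex.ofRealHom.mapMatrix :
      Matrix (Fin N) (Fin N) ℝ →+* Matrix (Fin N) (Fin N) ℂ) R j
    simp only [RingHom.mapMatrix_apply] at this
    exact this.symm
  rw [hmap]
  simp only [Matrix.vecMul, dotProduct, Matrix.map_apply]
  push_cast
  rfl

lemma vec_decay {N : ℕ} (R : Matrix (Fin N) (Fin N) ℝ)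
    (g : ℝ) (lam : Fin N → ℂ) (v : Fin N → Fin N → ℂ) (n₀ : Fin N)
    (hv₀ : ∃ c : ℂ, v n₀ = fun _ => c)
    (hgap : ∀ n, n ≠ n₀ → ‖lam n‖ ≤ Real.exp (-g))
    (heig : ∀ n, Matrix.vecMul (star (v n)) (R.map (Complex.ofReal)) = lam n • star (v n))
    (hnorm : ∀ n, ∑ i, Complex.normSq (v n i) = 1)
    (x : Fin N → ℝ) (tx : Fin N → ℂ)
    (hx : (fun i => (x i : ℂ)) = ∑ n, tx n • v n) (j : ℕ) :
    ∃ c : ℝ, ∀ i, |Matrix.vecMul x (R ^ j) i - c| ≤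
      Real.exp (-((j : ℝ) * g)) * ∑ n ∈ Finset.univ.erase n₀, ‖tx n‖ := by
  classical
  set Rc := R.map Complex.ofReal with hRc
  -- pointwise decomposition of x
  have hxi : ∀ i, (x i : ℂ) = ∑ n, tx n * v n i := by
    intro i
    have := congrFun hx i
    simpa [Finset.sum_apply] using this
  -- conjugated decomposition
  have hxconj : ∀ i, (x i : ℂ) = ∑ n, (starRingEnd ℂ) (tx n) * (starRingEnd ℂ) (v n i) := by
    intro i
    have h1 := congrArg (starRingEnd ℂ) (hxi i)
    simpa [map_sum, Complex.conj_ofReal] using h1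
  -- the complexified iterate
  have hX : ∀ i, ((Matrix.vecMul x (R ^ j) i : ℝ) : ℂ)
      = ∑ n, (starRingEnd ℂ) (tx n) * (lam n ^ j * (starRingEnd ℂ) (v n i)) := by
    intro i
    rw [cast_vecMul_pow]
    have hvm : Matrix.vecMul (fun k => (x k : ℂ)) (Rc ^ j) i
        = ∑ n, (starRingEnd ℂ) (tx n) * Matrix.vecMul (star (v n)) (Rc ^ j) i := by
      simp only [Matrix.vecMul, dotProduct, Pi.star_apply, RCLike.star_def]
      calc ∑ k, (x k : ℂ) * (Rc ^ j) k i
          = ∑ k, (∑ n, (starRingEnd ℂ) (tx n) * (starRingEnd ℂ) (v n k)) * (Rc ^ j) k i := by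
            exact Finset.sum_congr rfl (fun k _ => by rw [← hxconj k])
        _ = ∑ k, ∑ n, (starRingEnd ℂ) (tx n) * (starRingEnd ℂ) (v n k) * (Rc ^ j) k i := by
            exact Finset.sum_congr rfl (fun k _ => Finset.sum_mul _ _ _)
        _ = ∑ n, ∑ k, (starRingEnd ℂ) (tx n) * (starRingEnd ℂ) (v n k) * (Rc ^ j) k i :=
            Finset.sum_comm
        _ = ∑ n, (starRingEnd ℂ) (tx n) * ∑ k, (starRingEnd ℂ) (v n k) * (Rc ^ j) k i := by
            refine Finset.sum_congr rfl (fun n _ => ?_)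
            rw [Finset.mul_sum]
            exact Finset.sum_congr rfl (fun k _ => by ring)
    rw [hvm]
    refine Finset.sum_congr rfl (fun n _ => ?_)
    rw [eig_pow Rc (star (v n)) (lam n) (heig n) j]
    simp [Pi.smul_apply, smul_eq_mul]
  obtain ⟨c₀, hc₀⟩ := hv₀
  refine ⟨((starRingEnd ℂ) (tx n₀) * (lam n₀ ^ j * (starRingEnd ℂ) c₀)).re, fun i => ?_⟩
  set β : ℂ := (starRingEnd ℂ) (tx n₀) * (lam n₀ ^ j * (starRingEnd ℂ) c₀) with hβ
  have hv1 : ∀ n i, ‖v n i‖ ≤ 1 := by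
    intro n i
    have h2 : Complex.normSq (v n i) ≤ 1 := by
      rw [← hnorm n]
      exact Finset.single_le_sum (fun k _ => Complex.normSq_nonneg _) (Finset.mem_univ i)
    nlinarith [Complex.sq_norm (v n i), norm_nonneg (v n i)]
  have hsplit : ((Matrix.vecMul x (R ^ j) i : ℝ) : ℂ) - β
      = ∑ n ∈ Finset.univ.erase n₀, (starRingEnd ℂ) (tx n) * (lam n ^ j * (starRingEnd ℂ) (v n i)) := by
    rw [hX i, ← Finset.sum_erase_add _ _ (Finset.mem_univ n₀)]
    have hvi : v n₀ i = c₀ := by rw [hc₀]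
    rw [hvi, ← hβ, add_sub_cancel_right]
  have h1 : Matrix.vecMul x (R ^ j) i - β.re
      = (((Matrix.vecMul x (R ^ j) i : ℝ) : ℂ) - β).re := by
    simp [Complex.sub_re, Complex.ofReal_re]
  rw [h1]
  calc |(((Matrix.vecMul x (R ^ j) i : ℝ) : ℂ) - β).re|
      ≤ ‖(((Matrix.vecMul x (R ^ j) i : ℝ) : ℂ) - β)‖ := Complex.abs_re_le_norm _
    _ = ‖∑ n ∈ Finset.univ.erase n₀,
          (starRingEnd ℂ) (tx n) * (lam n ^ j * (starRingEnd ℂ) (v n i))‖ := by rw [hsplit]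
    _ ≤ ∑ n ∈ Finset.univ.erase n₀,
          ‖(starRingEnd ℂ) (tx n) * (lam n ^ j * (starRingEnd ℂ) (v n i))‖ :=
        norm_sum_le _ _
    _ ≤ ∑ n ∈ Finset.univ.erase n₀, ‖tx n‖ * Real.exp (-((j : ℝ) * g)) := by
        apply Finset.sum_le_sum
        intro n hn
        have hnn₀ : n ≠ n₀ := Finset.ne_of_mem_erase hn
        rw [norm_mul, norm_mul, Complex.norm_conj, Complex.norm_conj, norm_pow]
        have hlam : ‖lam n‖ ^ j ≤ Real.exp (-((j : ℝ) * g)) := by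
          have : ‖lam n‖ ^ j ≤ Real.exp (-g) ^ j :=
            pow_le_pow_left₀ (norm_nonneg _) (hgap n hnn₀) j
          calc ‖lam n‖ ^ j ≤ Real.exp (-g) ^ j := this
            _ = Real.exp (-((j : ℝ) * g)) := by
                rw [← Real.exp_nat_mul]; ring_nf
        calc ‖tx n‖ * (‖lam n‖ ^ j * ‖v n i‖)
            ≤ ‖tx n‖ * (Real.exp (-((j : ℝ) * g)) * 1) := by
              apply mul_le_mul_of_nonneg_left _ (norm_nonneg _)
              exact mul_le_mul hlam (hv1 n i) (norm_nonneg _) (Real.exp_nonneg _)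
          _ = ‖tx n‖ * Real.exp (-((j : ℝ) * g)) := by ring
    _ = Real.exp (-((j : ℝ) * g)) * ∑ n ∈ Finset.univ.erase n₀, ‖tx n‖ := by
        rw [← Finset.sum_mul, mul_comm]
open Matrix

lemma bilinear_bound {N : ℕ} (A : Matrix (Fin N) (Fin N) ℝ)
    (hrow : ∀ m, ∑ n, A m n = 0) (hcol : ∀ n, ∑ m, A m n = 0)
    (x y : Fin N → ℝ) (cx cy X Y : ℝ) (hX0 : 0 ≤ X) (hY0 : 0 ≤ Y)
    (hx : ∀ m, |x m - cx| ≤ X) (hy : ∀ n, |y n - cy| ≤ Y) :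
    |x ⬝ᵥ A.mulVec y| ≤ X * Y * ∑ m, ∑ n, |A m n| := by
  have hAv : ∀ m, A.mulVec y m = ∑ n, A m n * (y n - cy) := by
    intro m
    simp only [Matrix.mulVec, dotProduct, mul_sub, Finset.sum_sub_distrib]
    rw [← Finset.sum_mul, hrow m, zero_mul, sub_zero]
  have hAvsum : ∑ m, A.mulVec y m = 0 := by
    simp only [Matrix.mulVec, dotProduct]
    rw [Finset.sum_comm]
    apply Finset.sum_eq_zero
    intro n _
    rw [← Finset.sum_mul, hcol n, zero_mul]
  have key : x ⬝ᵥ A.mulVec y = ∑ m, (x m - cx) * A.mulVec y m := by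
    simp only [dotProduct, sub_mul, Finset.sum_sub_distrib]
    rw [← Finset.mul_sum, hAvsum, mul_zero, sub_zero]
  rw [key]
  calc |∑ m, (x m - cx) * A.mulVec y m| ≤ ∑ m, |(x m - cx) * A.mulVec y m| :=
        Finset.abs_sum_le_sum_abs _ _
    _ ≤ ∑ m, X * (Y * ∑ n, |A m n|) := by
        apply Finset.sum_le_sum
        intro m _
        rw [abs_mul]
        have h2 : |A.mulVec y m| ≤ Y * ∑ n, |A m n| := by
          rw [hAv m]
          calc |∑ n, A m n * (y n - cy)| ≤ ∑ n, |A m n * (y n - cy)| :=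
                Finset.abs_sum_le_sum_abs _ _
            _ ≤ ∑ n, |A m n| * Y := by
                apply Finset.sum_le_sum
                intro n _
                rw [abs_mul]
                exact mul_le_mul_of_nonneg_left (hy n) (abs_nonneg _)
            _ = Y * ∑ n, |A m n| := by rw [← Finset.sum_mul, mul_comm]
        exact mul_le_mul (hx m) h2 (abs_nonneg _) hX0
    _ = X * Y * ∑ m, ∑ n, |A m n| := by
        rw [← Finset.mul_sum, ← Finset.mul_sum, mul_assoc]

lemma telescope_id {N : ℕ} (R : Matrix (Fin N) (Fin N) ℝ) (P : Matrix (Fin N) (Fin N) ℝ)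
    (K : ℕ) :
    R ^ K * P - P * Rᵀ ^ K =
      ∑ j ∈ Finset.range K, R ^ j * (R * P - P * Rᵀ) * Rᵀ ^ (K - 1 - j) := by
  have h := Finset.sum_range_sub (fun j => R ^ j * P * Rᵀ ^ (K - j)) K
  have hterm : ∀ j ∈ Finset.range K,
      R ^ (j+1) * P * Rᵀ ^ (K - (j+1)) - R ^ j * P * Rᵀ ^ (K - j)
        = R ^ j * (R * P - P * Rᵀ) * Rᵀ ^ (K - 1 - j) := by
    intro j hj
    have hjK : j < K := Finset.mem_range.mp hj
    have h1 : K - (j+1) = K - 1 - j := by omega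
    have h2 : K - j = (K - 1 - j) + 1 := by omega
    rw [h1, h2, pow_succ, pow_succ']
    noncomm_ring
  rw [Finset.sum_congr rfl hterm] at h
  rw [h]
  simp
open Matrix

lemma dot_sum_mulVec {N : ℕ} (s : Finset ℕ) (M : ℕ → Matrix (Fin N) (Fin N) ℝ)
    (x y : Fin N → ℝ) :
    x ⬝ᵥ (∑ j ∈ s, M j) *ᵥ y = ∑ j ∈ s, x ⬝ᵥ (M j) *ᵥ y := by
  simp only [dotProduct, Matrix.mulVec, Matrix.sum_apply, Finset.sum_mul,
    Finset.mul_sum]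
  refine Eq.trans (Finset.sum_congr rfl fun m _ => Finset.sum_comm) ?_
  exact Finset.sum_comm



/-- **Discrete-time generalization:** for a time-homogeneous Markov chain with stochastic
matrix `R`, stationary distribution `π`, spectral gap `g = −ln|λ₂|`, per-step entropy
production `σ` and dynamical activity `γ`, the asymmetry of `K`-step cross-correlations
obeys `|δC_{ba}^K| ≤ K e^{−(K−1)g} ‖a‖_* ‖b‖_* · σ / Φ(σ/(2γ))`.
(With Lean's convention `0 / 0 = 0`, the case `σ = 0` is included.) -/
theorem discrete_time_asymmetry_bound
    (N : ℕ) (R : Matrix (Fin N) (Fin N) ℝ)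
    (hR_nonneg : ∀ m n : Fin N, 0 ≤ R m n)
    (hR_stoch : ∀ n : Fin N, ∑ m, R m n = 1)
    (hR_sign : ∀ m n : Fin N, m ≠ n → (0 < R m n ↔ 0 < R n m))
    (π : Fin N → ℝ) (hπ_pos : ∀ n, 0 < π n) (hπ_sum : ∑ n, π n = 1)
    (hstat : R.mulVec π = π)
    -- spectral decomposition of `R` by left eigenvectors
    (g : ℝ) (hg : 0 < g)
    (lam : Fin N → ℂ) (v : Fin N → Fin N → ℂ) (n₀ : Fin N)
    (hlam₀ : lam n₀ = 1)
    (hv₀ : ∃ c : ℂ, v n₀ = fun _ => c)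
    (hgap : ∀ n, n ≠ n₀ → ‖lam n‖ ≤ Real.exp (-g))
    (heig : ∀ n, Matrix.vecMul (star (v n)) (R.map (Complex.ofReal)) = lam n • star (v n))
    (hnorm : ∀ n, ∑ i, Complex.normSq (v n i) = 1)
    (hbasis : LinearIndependent ℂ v)
    -- `Φ` is the inverse on `[0,∞)` of `u ↦ u · tanh u`
    (Φ : ℝ → ℝ) (hΦ_nonneg : ∀ u, 0 ≤ u → 0 ≤ Φ u)
    (hΦ : ∀ u, 0 ≤ u → Φ u * Real.tanh (Φ u) = u)
    -- per-step entropy production and dynamical activity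
    (σ γ : ℝ)
    (hσ : σ = ∑ m, ∑ n, if m ≠ n then
        R m n * π n * Real.log ((R m n * π n) / (R n m * π m)) else 0)
    (hγ : γ = ∑ m, ∑ n, if m ≠ n then R m n * π n else 0)
    -- observables and their expansions in the left-eigenvector basis
    (a b : Fin N → ℝ) (ta tb : Fin N → ℂ)
    (hta : (fun i => (a i : ℂ)) = ∑ n, ta n • v n)
    (htb : (fun i => (b i : ℂ)) = ∑ n, tb n • v n)
    (K : ℕ) (hK : 1 ≤ K) :
    |b ⬝ᵥ (R ^ K * Matrix.diagonal π).mulVec a -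
        a ⬝ᵥ (R ^ K * Matrix.diagonal π).mulVec b| ≤
      (K : ℝ) * Real.exp (-(((K : ℝ) - 1) * g)) *
        (∑ n ∈ Finset.univ.erase n₀, ‖ta n‖) *
        (∑ n ∈ Finset.univ.erase n₀, ‖tb n‖) *
        (σ / Φ (σ / (2 * γ))) := by
  classical
  set Pm := Matrix.diagonal π with hPm
  set A := R * Pm - Pm * Rᵀ with hA
  set M := R ^ K * Pm with hM
  set Ta := ∑ n ∈ Finset.univ.erase n₀, ‖ta n‖ with hTa
  set Tb := ∑ n ∈ Finset.univ.erase n₀, ‖tb n‖ with hTb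
  set SA := ∑ m, ∑ n, |A m n| with hSA
  have hTann : 0 ≤ Ta := Finset.sum_nonneg (fun n _ => norm_nonneg _)
  have hTbnn : 0 ≤ Tb := Finset.sum_nonneg (fun n _ => norm_nonneg _)
  -- entries of A
  have hAent : ∀ m n, A m n = R m n * π n - R n m * π m := by
    intro m n
    simp only [hA, Matrix.sub_apply, hPm, Matrix.mul_diagonal, Matrix.diagonal_mul,
      Matrix.transpose_apply]
    ring
  have hstat' : ∀ m, ∑ n, R m n * π n = π m := by
    intro m
    have := congrFun hstat m
    simpa [Matrix.mulVec, dotProduct] using this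
  have hrow : ∀ m, ∑ n, A m n = 0 := by
    intro m
    simp only [hAent]
    rw [Finset.sum_sub_distrib, hstat' m, ← Finset.sum_mul, hR_stoch m, one_mul, sub_self]
  have hcol : ∀ n, ∑ m, A m n = 0 := by
    intro n
    simp only [hAent]
    rw [Finset.sum_sub_distrib, ← Finset.sum_mul, hR_stoch n, one_mul, hstat' n, sub_self]
  -- step 1: δ as telescoping sum
  have hδ : b ⬝ᵥ M.mulVec a - a ⬝ᵥ M.mulVec b
      = ∑ j ∈ Finset.range K, (b ᵥ* R ^ j) ⬝ᵥ A.mulVec (a ᵥ* R ^ (K - 1 - j)) := by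
    have h1 : a ⬝ᵥ M.mulVec b = b ⬝ᵥ Mᵀ.mulVec a := by
      rw [Matrix.dotProduct_mulVec, Matrix.mulVec_transpose]
      exact dotProduct_comm _ _
    rw [h1, ← dotProduct_sub, ← Matrix.sub_mulVec]
    have h2 : M - Mᵀ = ∑ j ∈ Finset.range K, R ^ j * A * Rᵀ ^ (K - 1 - j) := by
      have h3 : Mᵀ = Pm * Rᵀ ^ K := by
        rw [hM, Matrix.transpose_mul, Matrix.transpose_pow, hPm, Matrix.diagonal_transpose]
      rw [h3, hM, hA]
      exact telescope_id R Pm K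
    rw [h2, dot_sum_mulVec]
    refine Finset.sum_congr rfl (fun j hj => ?_)
    rw [Matrix.mul_assoc, ← Matrix.mulVec_mulVec, ← Matrix.mulVec_mulVec,
      Matrix.dotProduct_mulVec, ← Matrix.transpose_pow, Matrix.mulVec_transpose]
  -- step 2: per-term bound
  have hterm : ∀ j ∈ Finset.range K,
      |(b ᵥ* R ^ j) ⬝ᵥ A.mulVec (a ᵥ* R ^ (K - 1 - j))|
        ≤ Real.exp (-(((K : ℝ) - 1) * g)) * Ta * Tb * SA := by
    intro j hj
    have hjK := Finset.mem_range.mp hj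
    obtain ⟨cb, hb2⟩ := vec_decay R g lam v n₀ hv₀ hgap heig hnorm b tb htb j
    obtain ⟨ca, ha2⟩ := vec_decay R g lam v n₀ hv₀ hgap heig hnorm a ta hta (K - 1 - j)
    have hXnn : 0 ≤ Real.exp (-((j : ℝ) * g)) * Tb := by positivity
    have hYnn : 0 ≤ Real.exp (-(((K - 1 - j : ℕ) : ℝ) * g)) * Ta := by positivity
    have hbd := bilinear_bound A hrow hcol (b ᵥ* R ^ j) (a ᵥ* R ^ (K - 1 - j)) cb ca
      (Real.exp (-((j : ℝ) * g)) * Tb) (Real.exp (-(((K - 1 - j : ℕ) : ℝ) * g)) * Ta)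
      hXnn hYnn hb2 ha2
    have hm : ((K - 1 - j : ℕ) : ℝ) = (K : ℝ) - 1 - (j : ℝ) := by
      have h1 : (K - 1 - j : ℕ) = K - (1 + j) := by omega
      rw [h1, Nat.cast_sub (by omega)]
      push_cast
      ring
    have hexp : Real.exp (-((j : ℝ) * g)) * Real.exp (-(((K - 1 - j : ℕ) : ℝ) * g))
        = Real.exp (-(((K : ℝ) - 1) * g)) := by
      rw [← Real.exp_add, hm]
      ring_nf
    calc |(b ᵥ* R ^ j) ⬝ᵥ A.mulVec (a ᵥ* R ^ (K - 1 - j))|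
        ≤ (Real.exp (-((j : ℝ) * g)) * Tb) * (Real.exp (-(((K - 1 - j : ℕ) : ℝ) * g)) * Ta)
            * SA := hbd
      _ = (Real.exp (-((j : ℝ) * g)) * Real.exp (-(((K - 1 - j : ℕ) : ℝ) * g))) * Ta * Tb
            * SA := by ring
      _ = Real.exp (-(((K : ℝ) - 1) * g)) * Ta * Tb * SA := by rw [hexp]
  -- step 3: current (thermodynamic) bound
  have hcurrent : 0 ≤ σ ∧ SA * Φ (σ / (2 * γ)) ≤ σ ∧ (σ = 0 → SA = 0) := by
    set p : Fin N × Fin N → ℝ := fun e => R e.1 e.2 * π e.2 with hp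
    have hpnn : ∀ e, 0 ≤ p e := fun e => mul_nonneg (hR_nonneg _ _) (hπ_pos _).le
    have hposiff : ∀ m n : Fin N, (0 < R m n * π n ↔ 0 < R m n) := by
      intro m n
      constructor
      · intro h
        rcases (hR_nonneg m n).lt_or_eq with h2 | h2
        · exact h2
        · exfalso; rw [← h2, zero_mul] at h; exact lt_irrefl 0 h
      · intro h; exact mul_pos h (hπ_pos n)
    have hsign' : ∀ e : Fin N × Fin N, e.1 ≠ e.2 → (0 < p e ↔ 0 < p e.swap) := by
      intro e he
      rw [hp]
      simp only
      rw [hposiff, hposiff]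
      exact hR_sign e.1 e.2 he
    have hD : ∀ f : Fin N × Fin N → ℝ,
        (∑ m, ∑ n, if m ≠ n then f (m, n) else 0)
          = ∑ e ∈ Finset.univ.filter (fun e : Fin N × Fin N => e.1 ≠ e.2), f e := by
      intro f
      rw [Finset.sum_filter, ← Finset.univ_product_univ]
      exact (Finset.sum_product' Finset.univ Finset.univ
        (fun m n => if m ≠ n then f (m, n) else 0)).symm
    have hσ' : σ = ∑ e ∈ Finset.univ.filter (fun e : Fin N × Fin N => e.1 ≠ e.2),
        p e * Real.log (p e / p e.swap) := by
      rw [hσ]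
      exact hD (fun e => p e * Real.log (p e / p e.swap))
    have hγ' : γ = ∑ e ∈ Finset.univ.filter (fun e : Fin N × Fin N => e.1 ≠ e.2), p e := by
      rw [hγ]
      exact hD (fun e => p e)
    have hSAeq : SA = ∑ e ∈ Finset.univ.filter (fun e : Fin N × Fin N => e.1 ≠ e.2),
        |p e - p e.swap| := by
      have hstep : SA = ∑ m, ∑ n, if m ≠ n then |R m n * π n - R n m * π m| else 0 := by
        rw [hSA]
        refine Finset.sum_congr rfl (fun m _ => Finset.sum_congr rfl (fun n _ => ?_))
        by_cases h : m ≠ n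
        · rw [if_pos h, hAent]
        · rw [if_neg h]
          push_neg at h
          subst h
          rw [hAent, sub_self, abs_zero]
      rw [hstep]
      exact hD (fun e => |p e - p e.swap|)
    have hres := current_bound p hpnn hsign' σ γ (Φ (σ / (2 * γ))) hσ' hγ'
      (fun h => hΦ_nonneg _ h) (fun h => hΦ _ h)
    rw [← hSAeq] at hres
    exact hres
  -- assemble
  obtain ⟨hσnn, hcb, hzero⟩ := hcurrent
  have hmain : |b ⬝ᵥ M.mulVec a - a ⬝ᵥ M.mulVec b|
      ≤ (K : ℝ) * (Real.exp (-(((K : ℝ) - 1) * g)) * Ta * Tb * SA) := by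
    rw [hδ]
    calc |∑ j ∈ Finset.range K, (b ᵥ* R ^ j) ⬝ᵥ A.mulVec (a ᵥ* R ^ (K - 1 - j))|
        ≤ ∑ j ∈ Finset.range K, |(b ᵥ* R ^ j) ⬝ᵥ A.mulVec (a ᵥ* R ^ (K - 1 - j))| :=
          Finset.abs_sum_le_sum_abs _ _
      _ ≤ ∑ _j ∈ Finset.range K, Real.exp (-(((K : ℝ) - 1) * g)) * Ta * Tb * SA :=
          Finset.sum_le_sum hterm
      _ = (K : ℝ) * (Real.exp (-(((K : ℝ) - 1) * g)) * Ta * Tb * SA) := by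
          rw [Finset.sum_const, Finset.card_range, nsmul_eq_mul]
  have hC : (0:ℝ) ≤ (K : ℝ) * Real.exp (-(((K : ℝ) - 1) * g)) * Ta * Tb := by positivity
  by_cases hσ0 : σ = 0
  · have hSA0 : SA = 0 := hzero hσ0
    rw [hσ0, zero_div]
    rw [hSA0] at hmain
    calc |b ⬝ᵥ M.mulVec a - a ⬝ᵥ M.mulVec b| ≤ (K : ℝ) *
          (Real.exp (-(((K : ℝ) - 1) * g)) * Ta * Tb * 0) := hmain
      _ = (K : ℝ) * Real.exp (-(((K : ℝ) - 1) * g)) * Ta * Tb * 0 := by ring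
  · have hσpos : 0 < σ := lt_of_le_of_ne hσnn (Ne.symm hσ0)
    have hγnn : 0 ≤ γ := by
      rw [hγ]
      apply Finset.sum_nonneg
      intro m _
      apply Finset.sum_nonneg
      intro n _
      by_cases h : m ≠ n
      · rw [if_pos h]; exact mul_nonneg (hR_nonneg m n) (hπ_pos n).le
      · rw [if_neg h]
    have hγpos : 0 < γ := by
      rcases lt_or_eq_of_le hγnn with h | h
      · exact h
      · exfalso
        apply hσ0
        have hall : ∀ m, ∀ n, m ≠ n → R m n * π n = 0 := by
          intro m n hmn
          have h1 : ∑ m, ∑ n, (if m ≠ n then R m n * π n else 0) = 0 := by rw [← hγ, ← h]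
          have h2 : ∀ m ∈ Finset.univ, (0:ℝ) ≤ ∑ n, (if m ≠ n then R m n * π n else 0) := by
            intro m _
            apply Finset.sum_nonneg
            intro n _
            by_cases hc : m ≠ n
            · rw [if_pos hc]; exact mul_nonneg (hR_nonneg m n) (hπ_pos n).le
            · rw [if_neg hc]
          have h3 := (Finset.sum_eq_zero_iff_of_nonneg h2).mp h1 m (Finset.mem_univ m)
          have h4 : ∀ n ∈ Finset.univ, (0:ℝ) ≤ (if m ≠ n then R m n * π n else 0) := by
            intro n _
            by_cases hc : m ≠ n
            · rw [if_pos hc]; exact mul_nonneg (hR_nonneg m n) (hπ_pos n).le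
            · rw [if_neg hc]
          have h5 := (Finset.sum_eq_zero_iff_of_nonneg h4).mp h3 n (Finset.mem_univ n)
          rwa [if_pos hmn] at h5
        rw [hσ]
        apply Finset.sum_eq_zero
        intro m _
        apply Finset.sum_eq_zero
        intro n _
        by_cases hc : m ≠ n
        · rw [if_pos hc, hall m n hc, zero_mul]
        · rw [if_neg hc]
    have harg : 0 ≤ σ / (2 * γ) := by positivity
    set u := Φ (σ / (2 * γ)) with hu
    have hunn : 0 ≤ u := hΦ_nonneg _ harg
    have hs := hΦ _ harg
    rw [← hu] at hs
    have hupos : 0 < u := by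
      rcases lt_or_eq_of_le hunn with h | h
      · exact h
      · exfalso
        rw [← h] at hs
        simp only [zero_mul] at hs
        have hσγ : σ = σ / (2 * γ) * (2 * γ) := by field_simp
        rw [← hs, zero_mul] at hσγ
        exact hσ0 hσγ
    have hSAle : SA ≤ σ / u := (le_div_iff₀ hupos).mpr hcb
    calc |b ⬝ᵥ M.mulVec a - a ⬝ᵥ M.mulVec b|
        ≤ (K : ℝ) * (Real.exp (-(((K : ℝ) - 1) * g)) * Ta * Tb * SA) := hmain
      _ ≤ (K : ℝ) * (Real.exp (-(((K : ℝ) - 1) * g)) * Ta * Tb * (σ / u)) := by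
          apply mul_le_mul_of_nonneg_left _ (Nat.cast_nonneg K)
          apply mul_le_mul_of_nonneg_left hSAle
          positivity
      _ = (K : ℝ) * Real.exp (-(((K : ℝ) - 1) * g)) * Ta * Tb * (σ / u) := by ring
end

section
/- Let T ∈ ℝ^{N×N} satisfy T_{mn} > 0 for all m ≠ n, and have all row sums and all column sums equal to zero (T1 = 0 and Tᵀ1 = 0). Then for all a, b ∈ ℝ^N: (⟨b|(T − Tᵀ)|a⟩)² ≤ max_n(a_n² + b_n²) · (−⟨a|T|a⟩ − ⟨b|T|b⟩) · Σ_{m>n} (T_{mn} − T_{nm}) ln(T_{mn}/T_{nm}). -/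
open Matrix

lemma log_lower (x : ℝ) (hx : 1 ≤ x) : 2 * (x - 1) / (x + 1) ≤ Real.log x := by
  have hx0 : (0:ℝ) < x := lt_of_lt_of_le one_pos hx
  set f : ℝ → ℝ := fun t => Real.log t + 4 / (t + 1) with hf
  have hd : ∀ t : ℝ, 0 < t → HasDerivAt f (t⁻¹ + -1 / (t + 1) ^ 2 * 4) t := by
    intro t ht
    have h1 : HasDerivAt (fun s : ℝ => s + 1) 1 t := (hasDerivAt_id t).add_const 1
    have h2 : HasDerivAt (fun s : ℝ => (s + 1)⁻¹) (-1 / (t + 1) ^ 2) t :=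
      h1.inv (by positivity)
    have h3 : HasDerivAt (fun s : ℝ => 4 / (s + 1)) (-1 / (t + 1) ^ 2 * 4) t := by
      simpa [div_eq_mul_inv, mul_comm] using h2.const_mul (4:ℝ)
    exact (Real.hasDerivAt_log (ne_of_gt ht)).add h3
  have hmono : MonotoneOn f (Set.Ici (1:ℝ)) := by
    apply monotoneOn_of_deriv_nonneg (convex_Ici 1)
    · intro t ht
      have ht0 : (0:ℝ) < t := lt_of_lt_of_le one_pos ht
      exact ((hd t ht0).continuousAt).continuousWithinAt
    · intro t ht
      rw [interior_Ici] at ht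
      have ht0 : (0:ℝ) < t := lt_trans one_pos ht
      exact ((hd t ht0).differentiableAt).differentiableWithinAt
    · intro t ht
      rw [interior_Ici] at ht
      have ht0 : (0:ℝ) < t := lt_trans one_pos ht
      rw [(hd t ht0).deriv]
      have h4 : (0:ℝ) < (t + 1) ^ 2 := by positivity
      have h5 : 4 / (t + 1) ^ 2 ≤ t⁻¹ := by
        rw [div_le_iff₀ h4, inv_mul_eq_div, le_div_iff₀ ht0]
        nlinarith [sq_nonneg (t - 1)]
      have h6 : t⁻¹ + -1 / (t + 1) ^ 2 * 4 = t⁻¹ - 4 / (t + 1) ^ 2 := by ring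
      linarith
  have h5 := hmono (Set.self_mem_Ici) (Set.mem_Ici.mpr hx) hx
  have hf1 : f 1 = 2 := by simp [hf]; norm_num
  rw [hf1] at h5
  have h6 : (0:ℝ) < x + 1 := by linarith
  rw [div_le_iff₀ h6]
  simp only [hf] at h5
  have : 2 - 4 / (x + 1) ≤ Real.log x := by linarith
  have h8 : (2 - 4 / (x+1)) * (x+1) = 2*(x-1) := by field_simp; ring
  calc 2 * (x - 1) = (2 - 4/(x+1)) * (x+1) := h8.symm
    _ ≤ Real.log x * (x + 1) := by
        apply mul_le_mul_of_nonneg_right this (le_of_lt h6)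

lemma pq_ineq (p q : ℝ) (hp : 0 < p) (hq : 0 < q) :
    (p - q) ^ 2 / (p + q) ≤ (p - q) * Real.log (p / q) / 2 := by
  have key : ∀ u v : ℝ, 0 < v → v ≤ u → (u - v) ^ 2 / (u + v) ≤ (u - v) * Real.log (u / v) / 2 := by
    intro u v hv huv
    have hu : 0 < u := lt_of_lt_of_le hv huv
    have hx : 1 ≤ u / v := (one_le_div hv).mpr huv
    have h1 := log_lower (u / v) hx
    have h2 : 2 * (u / v - 1) / (u / v + 1) = 2 * (u - v) / (u + v) := by
      rw [div_eq_div_iff (by positivity) (by positivity)]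
      field_simp
    rw [h2] at h1
    have h3 : 0 ≤ u - v := by linarith
    have h4 : (u - v) * (2 * (u - v) / (u + v)) ≤ (u - v) * Real.log (u / v) :=
      mul_le_mul_of_nonneg_left h1 h3
    have h5 : (u - v) * (2 * (u - v) / (u + v)) = 2 * ((u - v) ^ 2 / (u + v)) := by
      field_simp
    linarith
  rcases le_total q p with h | h
  · exact key p q hq h
  · have := key q p hp h
    have e1 : Real.log (q / p) = - Real.log (p / q) := by
      rw [← Real.log_inv]; congr 1; field_simp
    rw [e1] at this
    have e2 : (q - p) ^ 2 = (p - q) ^ 2 := by ring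
    have e3 : q + p = p + q := by ring
    have e4 : (q - p) * - Real.log (p / q) = (p - q) * Real.log (p / q) := by ring
    rw [e2, e3, e4] at this
    exact this

lemma pair_sum {N : ℕ} (g : Fin N → Fin N → ℝ) (hg : ∀ m, g m m = 0) :
    ∑ m, ∑ n, g m n = ∑ m, ∑ n, (if n < m then g m n + g n m else 0) := by
  have h2 : ∑ m : Fin N, ∑ n : Fin N, (if m < n then g m n else 0)
      = ∑ m : Fin N, ∑ n : Fin N, (if n < m then g n m else 0) := Finset.sum_comm
  calc ∑ m, ∑ n, g m n
      = ∑ m : Fin N, ∑ n : Fin N,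
        ((if n < m then g m n else 0) + (if m < n then g m n else 0)) := by
        refine Finset.sum_congr rfl fun m _ => Finset.sum_congr rfl fun n _ => ?_
        rcases lt_trichotomy n m with h | h | h
        · simp [h, asymm h, not_lt.mpr h.le]
        · subst h; simp [hg]
        · simp [asymm h, h]
    _ = (∑ m : Fin N, ∑ n : Fin N, (if n < m then g m n else 0))
        + ∑ m : Fin N, ∑ n : Fin N, (if m < n then g m n else 0) := by
        simp only [Finset.sum_add_distrib]
    _ = (∑ m : Fin N, ∑ n : Fin N, (if n < m then g m n else 0))
        + ∑ m : Fin N, ∑ n : Fin N, (if n < m then g n m else 0) := by rw [h2]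
    _ = ∑ m : Fin N, ∑ n : Fin N,
        ((if n < m then g m n else 0) + (if n < m then g n m else 0)) := by
        simp only [Finset.sum_add_distrib]
    _ = _ := by
        refine Finset.sum_congr rfl fun m _ => Finset.sum_congr rfl fun n _ => ?_
        split_ifs <;> simp

lemma filter_to_double {N : ℕ} (f : Fin N → Fin N → ℝ) :
    ∑ p ∈ Finset.univ.filter (fun p : Fin N × Fin N => p.2 < p.1), f p.1 p.2
      = ∑ m, ∑ n, (if n < m then f m n else 0) := by
  rw [Finset.sum_filter, Fintype.sum_prod_type]

/-- For `T ∈ ℝ^{N×N}` with strictly positive off-diagonal entries and zero row and column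
sums, and all `a, b ∈ ℝ^N`:
`(⟨b|(T − Tᵀ)|a⟩)² ≤ max_n(a_n² + b_n²) · (−⟨a|T|a⟩ − ⟨b|T|b⟩) · Σ_{m>n} (T_{mn} − T_{nm}) ln(T_{mn}/T_{nm})`. -/
theorem asymmetry_sq_le_max_mul_decay_mul_KL
    (N : ℕ) (hN : 0 < N) (T : Matrix (Fin N) (Fin N) ℝ)
    (hT_pos : ∀ m n : Fin N, m ≠ n → 0 < T m n)
    (hT_row : ∀ n : Fin N, ∑ m, T n m = 0)
    (hT_col : ∀ n : Fin N, ∑ m, T m n = 0)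
    (a b : Fin N → ℝ) :
    (b ⬝ᵥ (T - Tᵀ).mulVec a) ^ 2 ≤
      (Finset.univ.sup' ⟨⟨0, hN⟩, Finset.mem_univ _⟩ fun n => a n ^ 2 + b n ^ 2) *
        (-(a ⬝ᵥ T.mulVec a) - b ⬝ᵥ T.mulVec b) *
        ∑ m, ∑ n, if n < m then (T m n - T n m) * Real.log (T m n / T n m) else 0 := by
  classical
  set P : Finset (Fin N × Fin N) :=
    Finset.univ.filter (fun p : Fin N × Fin N => p.2 < p.1) with hP
  set M : ℝ :=
    Finset.univ.sup' ⟨⟨0, hN⟩, Finset.mem_univ _⟩ (fun n => a n ^ 2 + b n ^ 2) with hM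
  have hMle : ∀ n : Fin N, a n ^ 2 + b n ^ 2 ≤ M := fun n =>
    Finset.le_sup' (fun n => a n ^ 2 + b n ^ 2) (Finset.mem_univ n)
  have hM0 : 0 ≤ M := le_trans (by positivity) (hMle ⟨0, hN⟩)
  have hPmem : ∀ p ∈ P, p.2 < p.1 := fun p hp => (Finset.mem_filter.mp hp).2
  have hp1 : ∀ p ∈ P, 0 < T p.1 p.2 := fun p hp => hT_pos _ _ (hPmem p hp).ne'
  have hp2 : ∀ p ∈ P, 0 < T p.2 p.1 := fun p hp => hT_pos _ _ (hPmem p hp).ne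
  have hs : ∀ p ∈ P, 0 < T p.1 p.2 + T p.2 p.1 := fun p hp =>
    add_pos (hp1 p hp) (hp2 p hp)
  -- asymmetry as a sum over ordered pairs
  have hδ : b ⬝ᵥ (T - Tᵀ).mulVec a
      = ∑ p ∈ P, (T p.1 p.2 - T p.2 p.1) * (b p.1 * a p.2 - b p.2 * a p.1) := by
    have e1 : b ⬝ᵥ (T - Tᵀ).mulVec a = ∑ m, ∑ n, b m * ((T m n - T n m) * a n) := by
      simp [dotProduct, Matrix.mulVec, Matrix.sub_apply, Matrix.transpose_apply,
        Finset.mul_sum, sub_mul, mul_sub]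
    rw [e1, pair_sum (fun m n => b m * ((T m n - T n m) * a n)) (by intro m; ring), hP,
      filter_to_double (fun m n => (T m n - T n m) * (b m * a n - b n * a m))]
    refine Finset.sum_congr rfl fun m _ => Finset.sum_congr rfl fun n _ => ?_
    split_ifs <;> ring
  -- the decay terms as sums over ordered pairs
  have key : ∀ c : Fin N → ℝ, -(c ⬝ᵥ T.mulVec c)
      = (∑ p ∈ P, (T p.1 p.2 + T p.2 p.1) * (c p.1 - c p.2) ^ 2) / 2 := by
    intro c
    have s1 : ∑ m : Fin N, ∑ n : Fin N, T m n * c m ^ 2 = 0 := by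
      refine Finset.sum_eq_zero fun m _ => ?_
      rw [← Finset.sum_mul, hT_row m, zero_mul]
    have s2 : ∑ m : Fin N, ∑ n : Fin N, T m n * c n ^ 2 = 0 := by
      rw [Finset.sum_comm]
      refine Finset.sum_eq_zero fun n _ => ?_
      rw [← Finset.sum_mul, hT_col n, zero_mul]
    have s3 : ∑ m : Fin N, ∑ n : Fin N, c m * (T m n * c n) = c ⬝ᵥ T.mulVec c := by
      simp [dotProduct, Matrix.mulVec, Finset.mul_sum]
    have e1 : ∑ m : Fin N, ∑ n : Fin N, T m n * (c m - c n) ^ 2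
        = -2 * (c ⬝ᵥ T.mulVec c) := by
      calc ∑ m : Fin N, ∑ n : Fin N, T m n * (c m - c n) ^ 2
          = ∑ m : Fin N, ∑ n : Fin N,
            (T m n * c m ^ 2 + T m n * c n ^ 2 - 2 * (c m * (T m n * c n))) := by
            refine Finset.sum_congr rfl fun m _ => Finset.sum_congr rfl fun n _ => by ring
        _ = (∑ m : Fin N, ∑ n : Fin N, T m n * c m ^ 2)
            + (∑ m : Fin N, ∑ n : Fin N, T m n * c n ^ 2)
            - 2 * ∑ m : Fin N, ∑ n : Fin N, c m * (T m n * c n) := by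
            simp only [Finset.sum_add_distrib, Finset.sum_sub_distrib, Finset.mul_sum]
        _ = -2 * (c ⬝ᵥ T.mulVec c) := by rw [s1, s2, s3]; ring
    have e2 := pair_sum (fun m n => T m n * (c m - c n) ^ 2) (by intro m; simp)
    rw [e1] at e2
    have e3 : ∑ p ∈ P, (T p.1 p.2 + T p.2 p.1) * (c p.1 - c p.2) ^ 2
        = ∑ m : Fin N, ∑ n : Fin N,
          (if n < m then T m n * (c m - c n) ^ 2 + T n m * (c n - c m) ^ 2 else 0) := by
      refine (filter_to_double (fun m n => (T m n + T n m) * (c m - c n) ^ 2)).trans ?_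
      refine Finset.sum_congr rfl fun m _ => Finset.sum_congr rfl fun n _ => ?_
      split_ifs <;> ring
    rw [e3, ← e2]
    ring
  -- the KL-type sum over ordered pairs
  have hK : ∑ m : Fin N, ∑ n : Fin N,
      (if n < m then (T m n - T n m) * Real.log (T m n / T n m) else 0)
      = ∑ p ∈ P, (T p.1 p.2 - T p.2 p.1) * Real.log (T p.1 p.2 / T p.2 p.1) :=
    (filter_to_double (fun m n => (T m n - T n m) * Real.log (T m n / T n m))).symm
  -- Cauchy–Schwarz
  set A : ℝ := ∑ p ∈ P, (T p.1 p.2 + T p.2 p.1) * (b p.1 * a p.2 - b p.2 * a p.1) ^ 2 with hA'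
  set B : ℝ := ∑ p ∈ P, (T p.1 p.2 - T p.2 p.1) ^ 2 / (T p.1 p.2 + T p.2 p.1) with hB'
  have hCS : (b ⬝ᵥ (T - Tᵀ).mulVec a) ^ 2 ≤ A * B := by
    rw [hδ]
    have cs := Finset.sum_mul_sq_le_sq_mul_sq P
      (fun p => Real.sqrt (T p.1 p.2 + T p.2 p.1) * (b p.1 * a p.2 - b p.2 * a p.1))
      (fun p => (T p.1 p.2 - T p.2 p.1) / Real.sqrt (T p.1 p.2 + T p.2 p.1))
    have e1 : ∑ p ∈ P,
        (Real.sqrt (T p.1 p.2 + T p.2 p.1) * (b p.1 * a p.2 - b p.2 * a p.1))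
          * ((T p.1 p.2 - T p.2 p.1) / Real.sqrt (T p.1 p.2 + T p.2 p.1))
        = ∑ p ∈ P, (T p.1 p.2 - T p.2 p.1) * (b p.1 * a p.2 - b p.2 * a p.1) := by
      refine Finset.sum_congr rfl fun p hp => ?_
      have h0 : Real.sqrt (T p.1 p.2 + T p.2 p.1) ≠ 0 :=
        ne_of_gt (Real.sqrt_pos.mpr (hs p hp))
      field_simp
    have e2 : ∑ p ∈ P,
        (Real.sqrt (T p.1 p.2 + T p.2 p.1) * (b p.1 * a p.2 - b p.2 * a p.1)) ^ 2 = A := by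
      refine Finset.sum_congr rfl fun p hp => ?_
      rw [mul_pow, Real.sq_sqrt (hs p hp).le]
    have e3 : ∑ p ∈ P,
        ((T p.1 p.2 - T p.2 p.1) / Real.sqrt (T p.1 p.2 + T p.2 p.1)) ^ 2 = B := by
      refine Finset.sum_congr rfl fun p hp => ?_
      rw [div_pow, Real.sq_sqrt (hs p hp).le]
    rw [e1, e2, e3] at cs
    exact cs
  have hA0 : 0 ≤ A := Finset.sum_nonneg fun p hp => mul_nonneg (hs p hp).le (sq_nonneg _)
  have hB0 : 0 ≤ B := Finset.sum_nonneg fun p hp =>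
    div_nonneg (sq_nonneg _) (hs p hp).le
  -- bound A
  set S : ℝ := ∑ p ∈ P,
    (T p.1 p.2 + T p.2 p.1) * ((a p.1 - a p.2) ^ 2 + (b p.1 - b p.2) ^ 2) with hS'
  have hAle : A ≤ M * S := by
    rw [hS', Finset.mul_sum, hA']
    refine Finset.sum_le_sum fun p hp => ?_
    have cs2 : (b p.1 * a p.2 - b p.2 * a p.1) ^ 2
        ≤ (a p.2 ^ 2 + b p.2 ^ 2) * ((a p.1 - a p.2) ^ 2 + (b p.1 - b p.2) ^ 2) := by
      nlinarith [sq_nonneg (a p.2 * (a p.1 - a p.2) + b p.2 * (b p.1 - b p.2))]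
    have h1 : (b p.1 * a p.2 - b p.2 * a p.1) ^ 2
        ≤ M * ((a p.1 - a p.2) ^ 2 + (b p.1 - b p.2) ^ 2) :=
      le_trans cs2 (mul_le_mul_of_nonneg_right (hMle p.2) (by positivity))
    calc (T p.1 p.2 + T p.2 p.1) * (b p.1 * a p.2 - b p.2 * a p.1) ^ 2
        ≤ (T p.1 p.2 + T p.2 p.1) * (M * ((a p.1 - a p.2) ^ 2 + (b p.1 - b p.2) ^ 2)) :=
          mul_le_mul_of_nonneg_left h1 (hs p hp).le
      _ = M * ((T p.1 p.2 + T p.2 p.1) * ((a p.1 - a p.2) ^ 2 + (b p.1 - b p.2) ^ 2)) := by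
          ring
  -- bound B
  have hBle : B ≤ (∑ p ∈ P, (T p.1 p.2 - T p.2 p.1) * Real.log (T p.1 p.2 / T p.2 p.1)) / 2 := by
    rw [hB', Finset.sum_div]
    exact Finset.sum_le_sum fun p hp => pq_ineq _ _ (hp1 p hp) (hp2 p hp)
  -- decay sum
  have hD : -(a ⬝ᵥ T.mulVec a) - b ⬝ᵥ T.mulVec b = S / 2 := by
    have e : -(a ⬝ᵥ T.mulVec a) - b ⬝ᵥ T.mulVec b
        = -(a ⬝ᵥ T.mulVec a) + -(b ⬝ᵥ T.mulVec b) := by ring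
    rw [e, key a, key b, ← add_div, hS', ← Finset.sum_add_distrib]
    congr 1
    exact Finset.sum_congr rfl fun p _ => by ring
  rw [hK, hD]
  have hMS0 : 0 ≤ M * S := le_trans hA0 hAle
  have final : A * B ≤ (M * S)
      * ((∑ p ∈ P, (T p.1 p.2 - T p.2 p.1) * Real.log (T p.1 p.2 / T p.2 p.1)) / 2) :=
    mul_le_mul hAle hBle hB0 hMS0
  calc (b ⬝ᵥ (T - Tᵀ).mulVec a) ^ 2 ≤ A * B := hCS
    _ ≤ (M * S)
        * ((∑ p ∈ P, (T p.1 p.2 - T p.2 p.1) * Real.log (T p.1 p.2 / T p.2 p.1)) / 2) := final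
    _ = M * (S / 2) * ∑ p ∈ P, (T p.1 p.2 - T p.2 p.1) * Real.log (T p.1 p.2 / T p.2 p.1) := by
        ring
end

section
/- Let n ≥ 1 and let p₁,…,p_n, q₁,…,q_n be positive reals with p_i > q_i for all i, and ℓ₁,…,ℓ_n ≥ 0 with Σ_i ℓ_i > 0. Then Σ_{i=1}^{n} ((p_i + q_i)/(p_i − q_i)) ℓ_i² ≥ (Σ_{i=1}^{n} ℓ_i)² / ( n · tanh( (1/(2n)) Σ_{i=1}^{n} ln(p_i/q_i) ) ). -/
open Real Finset

noncomputable def hfun : ℝ → ℝ := fun t => (Real.exp t - 1) / (Real.exp t + 1)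

lemma hasDerivAt_hfun (t : ℝ) :
    HasDerivAt hfun (2 * Real.exp t / (Real.exp t + 1) ^ 2) t := by
  have he := Real.hasDerivAt_exp t
  have hne : Real.exp t + 1 ≠ 0 := by positivity
  have := (he.sub_const 1).div (he.add_const 1) hne
  refine this.congr_deriv ?_
  rw [div_eq_div_iff (by positivity) (by positivity)]
  ring

lemma hasDerivAt_hfun' (t : ℝ) :
    HasDerivAt (fun t => 2 * Real.exp t / (Real.exp t + 1) ^ 2)
      (2 * Real.exp t * (1 - Real.exp t) / (Real.exp t + 1) ^ 3) t := by
  have he := Real.hasDerivAt_exp t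
  have hne : (Real.exp t + 1) ^ 2 ≠ 0 := by positivity
  have hnum : HasDerivAt (fun t => 2 * Real.exp t) (2 * Real.exp t) t := he.const_mul 2
  have hden : HasDerivAt (fun t => (Real.exp t + 1) ^ 2)
      (2 * (Real.exp t + 1) ^ 1 * Real.exp t) t := (he.add_const 1).pow 2
  have := hnum.div hden hne
  refine this.congr_deriv ?_
  have h1 : Real.exp t + 1 ≠ 0 := by positivity
  rw [div_eq_div_iff (by positivity) (by positivity)]
  ring

lemma concave_hfun : ConcaveOn ℝ (Set.Ici 0) hfun := by
  apply concaveOn_of_hasDerivWithinAt2_nonpos (convex_Ici 0)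
    (f' := fun t => 2 * Real.exp t / (Real.exp t + 1) ^ 2)
    (f'' := fun t => 2 * Real.exp t * (1 - Real.exp t) / (Real.exp t + 1) ^ 3)
  · apply ContinuousOn.div
    · fun_prop
    · fun_prop
    · intro x _; positivity
  · intro x _; exact (hasDerivAt_hfun x).hasDerivWithinAt
  · intro x _; exact (hasDerivAt_hfun' x).hasDerivWithinAt
  · intro x hx
    rw [interior_Ici] at hx
    have h1 : (1 : ℝ) ≤ Real.exp x := by
      rw [← Real.exp_zero]; exact Real.exp_le_exp.2 (le_of_lt hx)
    apply div_nonpos_of_nonpos_of_nonneg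
    · apply mul_nonpos_of_nonneg_of_nonpos
      · positivity
      · linarith
    · positivity

lemma tanh_eq_hfun (u : ℝ) : Real.tanh u = hfun (2 * u) := by
  have h2 : Real.exp (2 * u) = Real.exp u * Real.exp u := by
    rw [← Real.exp_add]; ring_nf
  have hn : Real.exp (-u) = (Real.exp u)⁻¹ := Real.exp_neg u
  have he : Real.exp u ≠ 0 := Real.exp_ne_zero u
  have hpos : (0:ℝ) < Real.exp u * Real.exp u + 1 := by positivity
  rw [Real.tanh_eq_sinh_div_cosh, Real.sinh_eq, Real.cosh_eq, hfun, h2, hn]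
  rw [div_eq_div_iff (by positivity) (by positivity)]
  field_simp

/-- Cauchy–Schwarz plus Jensen for `arctanh`: for positive reals `p_i > q_i` and
nonnegative lengths `ℓ_i` with positive total length,
`Σ_i ((p_i + q_i)/(p_i − q_i)) ℓ_i² ≥ (Σ_i ℓ_i)² / (n · tanh((1/(2n)) Σ_i ln(p_i/q_i)))`. -/
theorem sum_ratio_mul_sq_ge_sq_div_tanh
    (n : ℕ) (hn : 1 ≤ n) (p q ℓ : Fin n → ℝ)
    (hq : ∀ i, 0 < q i) (hpq : ∀ i, q i < p i)
    (hℓ : ∀ i, 0 ≤ ℓ i) (hℓsum : 0 < ∑ i, ℓ i) :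
    (∑ i, ℓ i) ^ 2 / ((n : ℝ) * Real.tanh ((1 / (2 * (n : ℝ))) * ∑ i, Real.log (p i / q i))) ≤
      ∑ i, ((p i + q i) / (p i - q i)) * ℓ i ^ 2 := by
  have hnpos : (0:ℝ) < n := by exact_mod_cast hn
  set x : Fin n → ℝ := fun i => (p i - q i) / (p i + q i) with hxdef
  have hxpos : ∀ i, 0 < x i := fun i =>
    div_pos (by linarith [hpq i, hq i]) (by linarith [hpq i, hq i])
  have hr : ∀ i, 1 < p i / q i := fun i => (one_lt_div (hq i)).2 (hpq i)
  have hlog : ∀ i, 0 ≤ Real.log (p i / q i) := fun i =>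
    Real.log_nonneg (hr i).le
  -- x i = hfun (log (p i / q i))
  have hx_eq : ∀ i, x i = hfun (Real.log (p i / q i)) := by
    intro i
    have hq' := hq i
    have hp' : 0 < p i := lt_trans hq' (hpq i)
    rw [hfun, Real.exp_log (div_pos hp' hq')]
    rw [hxdef]
    rw [div_eq_div_iff (by linarith [hpq i]) (by positivity)]
    field_simp
  -- Jensen: (1/n) Σ x ≤ hfun ((1/n) Σ log)
  have hjensen : (∑ i, (1 / (n:ℝ)) • hfun (Real.log (p i / q i))) ≤
      hfun (∑ i, (1 / (n:ℝ)) • Real.log (p i / q i)) := by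
    apply concave_hfun.le_map_sum
    · intro i _; positivity
    · simp [Finset.sum_const, Finset.card_univ]
      field_simp
    · intro i _; exact hlog i
  have hsum_eq : (∑ i, (1 / (n:ℝ)) • Real.log (p i / q i)) =
      2 * ((1 / (2 * (n:ℝ))) * ∑ i, Real.log (p i / q i)) := by
    rw [← Finset.smul_sum]; simp [smul_eq_mul]; ring
  have hkey : (∑ i, x i) ≤ (n:ℝ) * Real.tanh ((1 / (2 * (n:ℝ))) * ∑ i, Real.log (p i / q i)) := by
    rw [tanh_eq_hfun, ← hsum_eq]
    have heq : (n:ℝ) * ∑ i, (1 / (n:ℝ)) • hfun (Real.log (p i / q i)) = ∑ i, x i := by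
      rw [Finset.mul_sum]
      refine Finset.sum_congr rfl fun i _ => ?_
      rw [hx_eq i, smul_eq_mul]
      field_simp
    rw [← heq]
    exact mul_le_mul_of_nonneg_left hjensen hnpos.le
  have hxsum : 0 < ∑ i, x i := by
    apply Finset.sum_pos (fun i _ => hxpos i)
    exact Finset.univ_nonempty_iff.2 (Fin.pos_iff_nonempty.1 hn)
  -- Cauchy-Schwarz
  have hcs : (∑ i, ℓ i) ^ 2 / (∑ i, x i) ≤ ∑ i, ℓ i ^ 2 / x i :=
    Finset.sq_sum_div_le_sum_sq_div _ ℓ (fun i _ => hxpos i)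
  have hterm : ∀ i, ℓ i ^ 2 / x i = ((p i + q i) / (p i - q i)) * ℓ i ^ 2 := by
    intro i
    rw [hxdef]
    have h1 : p i - q i ≠ 0 := by have := hpq i; linarith
    have h2 : p i + q i ≠ 0 := by have := hq i; have := hpq i; linarith
    field_simp
  calc (∑ i, ℓ i) ^ 2 / ((n:ℝ) * Real.tanh ((1 / (2 * (n:ℝ))) * ∑ i, Real.log (p i / q i)))
      ≤ (∑ i, ℓ i) ^ 2 / (∑ i, x i) := by
        exact div_le_div_of_nonneg_left (sq_nonneg _) hxsum hkey
    _ ≤ ∑ i, ℓ i ^ 2 / x i := hcs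
    _ = ∑ i, ((p i + q i) / (p i - q i)) * ℓ i ^ 2 :=
        Finset.sum_congr rfl fun i _ => hterm i
end
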